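/- arXiv:2304.08099 — 7 statements merged into one kernel-verified Lean document; each statement's English description precedes it below -/
import Mathlib

section
/- Suppose the spec-map is bijective. Then for every x ∈ 𝒪_K there exists a positive integer n such that x^n ∈ 𝒪. -/
open NumberField

set_option synthInstance.maxHeartbeats 1000000
set_option maxHeartbeats 1000000

variable {K : Type*} [Field K] [NumberField K]

/-- A subring `O ⊆ 𝓞 K` is an *order* in `K` if its field of fractions is `K`;
equivalently, every element of `𝓞 K` admits a nonzero integer multiple lying in `O`. -/
def Subring.IsOrder (O : Subring (𝓞 K)) : Prop :=
  ∀ x : 𝓞 K, ∃ n : ℤ, n ≠ 0 ∧ (n : 𝓞 K) * x ∈ O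

/-- The conductor `𝔣 = {x ∈ 𝓞 K : x • 𝓞 K ⊆ O}` of a subring `O ⊆ 𝓞 K`,
as an ideal of `𝓞 K`. -/
def conductorIdeal (O : Subring (𝓞 K)) : Ideal (𝓞 K) where
  carrier := {x : 𝓞 K | ∀ y : 𝓞 K, x * y ∈ O}
  add_mem' := by
    intro a b ha hb y
    simpa [add_mul] using O.add_mem (ha y) (hb y)
  zero_mem' := by
    intro y
    simpa using O.zero_mem
  smul_mem' := by
    intro c x hx y
    simpa [smul_eq_mul, mul_assoc, mul_comm, mul_left_comm] using hx (c * y)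

/-- A commutative ring is *half-factorial* if every nonzero nonunit is a product of
irreducible elements, and any two factorizations of a nonzero nonunit into irreducibles
have the same length. -/
def IsHalfFactorialRing (R : Type*) [CommRing R] : Prop :=
  (∀ a : R, a ≠ 0 → ¬ IsUnit a →
      ∃ l : Multiset R, (∀ b ∈ l, Irreducible b) ∧ l.prod = a) ∧
  (∀ a : R, a ≠ 0 → ¬ IsUnit a →
      ∀ l₁ l₂ : Multiset R, (∀ b ∈ l₁, Irreducible b) → (∀ b ∈ l₂, Irreducible b) →
        l₁.prod = a → l₂.prod = a → Multiset.card l₁ = Multiset.card l₂)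

/-- The spec-map `𝔓 ↦ 𝔓 ∩ 𝒪` is a bijection between the nonzero prime ideals of `𝓞 K`
and the nonzero prime ideals of `O`. -/
def SpecMapBijective (O : Subring (𝓞 K)) : Prop :=
  Set.BijOn (fun P : Ideal (𝓞 K) => P.comap O.subtype)
    {P : Ideal (𝓞 K) | P.IsPrime ∧ P ≠ ⊥} {p : Ideal O | p.IsPrime ∧ p ≠ ⊥}

/-- The localization `𝒪_𝔭` of `O` at a prime ideal `𝔭` of `O`, realized as a subring
of `K`. -/
def locO (O : Subring (𝓞 K)) (p : Ideal O) (hp : p.IsPrime) : Subring K where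
  carrier := {x : K | ∃ a s : O, s ∉ p ∧
    x * algebraMap (𝓞 K) K (s : 𝓞 K) = algebraMap (𝓞 K) K (a : 𝓞 K)}
  one_mem' := ⟨1, 1, fun h => hp.ne_top ((Ideal.eq_top_iff_one _).mpr h), by simp⟩
  zero_mem' := ⟨0, 1, fun h => hp.ne_top ((Ideal.eq_top_iff_one _).mpr h), by simp⟩
  mul_mem' := by
    rintro x y ⟨a, s, hs, hx⟩ ⟨b, t, ht, hy⟩
    refine ⟨a * b, s * t, fun h => ((hp.mem_or_mem h).elim hs ht), ?_⟩
    push_cast [map_mul]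
    calc x * y * (algebraMap (𝓞 K) K s * algebraMap (𝓞 K) K t)
        = (x * algebraMap (𝓞 K) K s) * (y * algebraMap (𝓞 K) K t) := by ring
      _ = _ := by rw [hx, hy]
  add_mem' := by
    rintro x y ⟨a, s, hs, hx⟩ ⟨b, t, ht, hy⟩
    refine ⟨a * t + b * s, s * t, fun h => ((hp.mem_or_mem h).elim hs ht), ?_⟩
    push_cast [map_mul, map_add]
    calc (x + y) * (algebraMap (𝓞 K) K s * algebraMap (𝓞 K) K t)
        = (x * algebraMap (𝓞 K) K s) * algebraMap (𝓞 K) K t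
          + (y * algebraMap (𝓞 K) K t) * algebraMap (𝓞 K) K s := by ring
      _ = _ := by rw [hx, hy]
  neg_mem' := by
    rintro x ⟨a, s, hs, hx⟩
    exact ⟨-a, s, hs, by push_cast [map_neg]; rw [neg_mul, hx]⟩

/-- The localization `(𝒪_K)_𝔭 = 𝒪_K · (𝒪 ∖ 𝔭)⁻¹` of `𝓞 K` at the prime ideal `𝔭` of `O`
(the integral closure of `𝒪_𝔭`), realized as a subring of `K`. -/
def locOK (O : Subring (𝓞 K)) (p : Ideal O) (hp : p.IsPrime) : Subring K where
  carrier := {x : K | ∃ (a : 𝓞 K) (s : O), s ∉ p ∧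
    x * algebraMap (𝓞 K) K (s : 𝓞 K) = algebraMap (𝓞 K) K a}
  one_mem' := ⟨1, 1, fun h => hp.ne_top ((Ideal.eq_top_iff_one _).mpr h), by simp⟩
  zero_mem' := ⟨0, 1, fun h => hp.ne_top ((Ideal.eq_top_iff_one _).mpr h), by simp⟩
  mul_mem' := by
    rintro x y ⟨a, s, hs, hx⟩ ⟨b, t, ht, hy⟩
    refine ⟨a * b, s * t, fun h => ((hp.mem_or_mem h).elim hs ht), ?_⟩
    push_cast [map_mul]
    calc x * y * (algebraMap (𝓞 K) K s * algebraMap (𝓞 K) K t)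
        = (x * algebraMap (𝓞 K) K s) * (y * algebraMap (𝓞 K) K t) := by ring
      _ = _ := by rw [hx, hy]
  add_mem' := by
    rintro x y ⟨a, s, hs, hx⟩ ⟨b, t, ht, hy⟩
    refine ⟨a * t + b * s, s * t, fun h => ((hp.mem_or_mem h).elim hs ht), ?_⟩
    push_cast [map_mul, map_add]
    calc (x + y) * (algebraMap (𝓞 K) K s * algebraMap (𝓞 K) K t)
        = (x * algebraMap (𝓞 K) K s) * algebraMap (𝓞 K) K t
          + (y * algebraMap (𝓞 K) K t) * algebraMap (𝓞 K) K s := by ring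
      _ = _ := by rw [hx, hy]
  neg_mem' := by
    rintro x ⟨a, s, hs, hx⟩
    exact ⟨-a, s, hs, by push_cast [map_neg]; rw [neg_mul, hx]⟩

lemma locO_le_locOK (O : Subring (𝓞 K)) (p : Ideal O) (hp : p.IsPrime) :
    locO O p hp ≤ locOK O p hp := by
  rintro x ⟨a, s, hs, hx⟩
  exact ⟨(a : 𝓞 K), s, hs, hx⟩

/-- The subring `O + I` of `𝓞 K`, for a subring `O` and an ideal `I` of `𝓞 K`. -/
def orderPlus (O : Subring (𝓞 K)) (I : Ideal (𝓞 K)) : Subring (𝓞 K) where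
  carrier := {x : 𝓞 K | ∃ a ∈ O, ∃ b ∈ I, x = a + b}
  one_mem' := ⟨1, O.one_mem, 0, I.zero_mem, by ring⟩
  zero_mem' := ⟨0, O.zero_mem, 0, I.zero_mem, by ring⟩
  mul_mem' := by
    rintro x y ⟨a, ha, b, hb, rfl⟩ ⟨c, hc, d, hd, rfl⟩
    refine ⟨a * c, O.mul_mem ha hc, a * d + b * c + b * d,
      I.add_mem (I.add_mem (I.mul_mem_left a hd) (I.mul_mem_right c hb)) (I.mul_mem_left b hd), by ring⟩
  add_mem' := by
    rintro x y ⟨a, ha, b, hb, rfl⟩ ⟨c, hc, d, hd, rfl⟩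
    exact ⟨a + c, O.add_mem ha hc, b + d, I.add_mem hb hd, by ring⟩
  neg_mem' := by
    rintro x ⟨a, ha, b, hb, rfl⟩
    exact ⟨-a, O.neg_mem ha, -b, I.neg_mem hb, by ring⟩

lemma le_orderPlus (O : Subring (𝓞 K)) (I : Ideal (𝓞 K)) : O ≤ orderPlus O I :=
  fun a ha => ⟨a, ha, 0, I.zero_mem, by ring⟩

/-- The order `ℤ + f·𝒪_K` in `K`. -/
def zOrder (f : ℕ) : Subring (𝓞 K) where
  carrier := {x : 𝓞 K | ∃ (a : ℤ) (b : 𝓞 K), x = (a : 𝓞 K) + (f : 𝓞 K) * b}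
  one_mem' := ⟨1, 0, by push_cast; ring⟩
  zero_mem' := ⟨0, 0, by push_cast; ring⟩
  mul_mem' := by
    rintro x y ⟨a, b, rfl⟩ ⟨c, d, rfl⟩
    exact ⟨a * c, (a : 𝓞 K) * d + (c : 𝓞 K) * b + (f : 𝓞 K) * b * d, by push_cast; ring⟩
  add_mem' := by
    rintro x y ⟨a, b, rfl⟩ ⟨c, d, rfl⟩
    exact ⟨a + c, b + d, by push_cast; ring⟩
  neg_mem' := by
    rintro x ⟨a, b, rfl⟩
    exact ⟨-a, -b, by push_cast; ring⟩

/-- The natural homomorphism `𝒪_K^× → (𝒪_K/𝔣)^×/(𝒪/𝔣)^×`: reduction modulo the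
conductor `𝔣`, followed by the quotient by (the image of) `(𝒪/𝔣)^×`. -/
noncomputable def unitClassMap (O : Subring (𝓞 K)) :
    (𝓞 K)ˣ →*
      ((𝓞 K ⧸ conductorIdeal O)ˣ ⧸
        (Units.map (Subring.map (Ideal.Quotient.mk (conductorIdeal O)) O).subtype.toMonoidHom).range) :=
  (QuotientGroup.mk' _).comp (Units.map (Ideal.Quotient.mk (conductorIdeal O)).toMonoidHom)

/-- **Lemma 2.1.** If the spec-map is bijective, then for every `x ∈ 𝒪_K` there is a
positive integer `n` with `x^n ∈ 𝒪`. -/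
theorem pow_mem_of_specMapBijective (O : Subring (𝓞 K)) (hO : O.IsOrder)
    (hspec : SpecMapBijective O) :
    ∀ x : 𝓞 K, ∃ n : ℕ, 0 < n ∧ x ^ n ∈ O := by
  classical
  set 𝔣 := conductorIdeal O with h𝔣def
  have hfO : ∀ f ∈ 𝔣, f ∈ O := fun f hf => by
    have hf' : ∀ y : 𝓞 K, f * y ∈ O := hf
    simpa using hf' 1
  -- the conductor contains a nonzero integer
  obtain ⟨n, hn0, hn⟩ : ∃ n : ℤ, n ≠ 0 ∧ ∀ y : 𝓞 K, ((n : ℤ) : 𝓞 K) * y ∈ O := by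
    let b : Module.Basis (Module.Free.ChooseBasisIndex ℤ (𝓞 K)) ℤ (𝓞 K) :=
      Module.Free.chooseBasis ℤ (𝓞 K)
    choose m hm0 hm using fun i => hO (b i)
    refine ⟨∏ i, m i, Finset.prod_ne_zero_iff.mpr (fun i _ => hm0 i), ?_⟩
    let S : Submodule ℤ (𝓞 K) :=
      { carrier := {y : 𝓞 K | ((∏ i, m i : ℤ) : 𝓞 K) * y ∈ O}
        add_mem' := fun ha hb => by simpa [mul_add] using O.add_mem ha hb
        zero_mem' := by simpa using O.zero_mem
        smul_mem' := fun c y hy => by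
          show ((∏ i, m i : ℤ) : 𝓞 K) * (c • y) ∈ O
          rw [zsmul_eq_mul, mul_left_comm]
          exact O.mul_mem (intCast_mem O c) hy }
    have hbS : Set.range b ⊆ S := by
      rintro _ ⟨i, rfl⟩
      show ((∏ j, m j : ℤ) : 𝓞 K) * b i ∈ O
      have hprod : (∏ j ∈ Finset.univ.erase i, m j) * m i = ∏ j, m j :=
        Finset.prod_erase_mul _ _ (Finset.mem_univ i)
      rw [← hprod, Int.cast_mul, mul_assoc]
      exact O.mul_mem (intCast_mem O _) (hm i)
    have hS : S = ⊤ := by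
      rw [eq_top_iff, ← b.span_eq]
      exact Submodule.span_le.mpr hbS
    intro y
    have : y ∈ S := hS ▸ Submodule.mem_top
    exact this
  have hn𝔣 : ((n : ℤ) : 𝓞 K) ∈ 𝔣 := hn
  have hncast : ((n : ℤ) : 𝓞 K) ≠ 0 := by exact_mod_cast hn0
  have h𝔣ne : 𝔣 ≠ ⊥ := fun h => hncast (by simpa [h] using hn𝔣)
  intro x
  -- find N > 0 with x^N * x^N - x^N ∈ 𝔣
  haveI : Fintype (𝓞 K ⧸ 𝔣) := @Fintype.ofFinite _ (Ideal.finiteQuotientOfFreeOfNeBot 𝔣 h𝔣ne)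
  set q := Ideal.Quotient.mk 𝔣 with hq
  obtain ⟨i, j, hij, hpow⟩ := Finite.exists_ne_map_eq_of_infinite (fun t : ℕ => q x ^ t)
  -- wlog i < j
  obtain ⟨N, hNpos, he⟩ : ∃ N : ℕ, 0 < N ∧ x ^ N * x ^ N - x ^ N ∈ 𝔣 := by
    have key : ∀ i j : ℕ, i < j → q x ^ i = q x ^ j →
        ∃ N : ℕ, 0 < N ∧ x ^ N * x ^ N - x ^ N ∈ 𝔣 := by
      intro i j hlt heq
      set k := j - i with hk
      have hk0 : 0 < k := Nat.sub_pos_of_lt hlt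
      have hik : i + k = j := Nat.add_sub_cancel' hlt.le
      have step : ∀ t : ℕ, q x ^ (i + t * k) = q x ^ i := by
        intro t
        induction t with
        | zero => simp
        | succ t ih =>
          have : i + (t + 1) * k = (i + t * k) + k := by ring
          rw [this, pow_add, ih, ← pow_add, hik, ← heq]
      set N := (i + 1) * k with hN
      have hNpos : 0 < N := Nat.mul_pos (Nat.succ_pos i) hk0
      have hiN : i ≤ N :=
        le_trans (Nat.le_succ i) (Nat.le_mul_of_pos_right _ hk0)
      have key2 : q x ^ (N + N) = q x ^ N := by
        have h1 : N + N = (i + (N - i)) + (i + 1) * k := by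
          rw [Nat.add_sub_cancel' hiN]
        have h2 : q x ^ ((i + (N - i)) + (i + 1) * k)
            = q x ^ (i + (N - i)) := by
          rw [pow_add, show i + (N - i) = i + (N - i) from rfl]
          have := step (i + 1)
          calc q x ^ (i + (N - i)) * q x ^ ((i + 1) * k)
              = q x ^ (N - i) * (q x ^ i * q x ^ ((i + 1) * k)) := by
                rw [pow_add]; ring
            _ = q x ^ (N - i) * q x ^ (i + (i + 1) * k) := by rw [← pow_add]
            _ = q x ^ (N - i) * q x ^ i := by rw [step]
            _ = q x ^ (i + (N - i)) := by rw [pow_add]; ring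
        rw [h1, h2, Nat.add_sub_cancel' hiN]
      refine ⟨N, hNpos, ?_⟩
      have : q (x ^ N * x ^ N - x ^ N) = 0 := by
        rw [map_sub, map_mul, map_pow, ← pow_add, key2, sub_self]
      exact (Ideal.Quotient.eq_zero_iff_mem).mp this
    rcases lt_or_gt_of_ne hij with h | h
    · exact key i j h hpow
    · exact key j i h hpow.symm
  refine ⟨N, hNpos, ?_⟩
  set e := x ^ N with hedef
  -- the comaximal ideals I, J
  set I : Ideal (𝓞 K) := Ideal.span {e} ⊔ 𝔣 with hIdef
  set J : Ideal (𝓞 K) := Ideal.span {e - 1} ⊔ 𝔣 with hJdef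
  have heI : e ∈ I := Ideal.mem_sup_left (Ideal.subset_span rfl)
  have heJ : e - 1 ∈ J := Ideal.mem_sup_left (Ideal.subset_span rfl)
  have h𝔣I : 𝔣 ≤ I := le_sup_right
  have h𝔣J : 𝔣 ≤ J := le_sup_right
  have htop : I ⊔ J = ⊤ := by
    rw [Ideal.eq_top_iff_one]
    have h1 : (1 : 𝓞 K) = e - (e - 1) := by ring
    rw [h1]
    exact sub_mem (Ideal.mem_sup_left heI) (Ideal.mem_sup_right heJ)
  have hmul : I * J ≤ 𝔣 := by
    rw [Ideal.mul_le]
    intro r hr s hs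
    obtain ⟨r1, hr1, r2, hr2, rfl⟩ := Submodule.mem_sup.mp hr
    obtain ⟨s1, hs1, s2, hs2, rfl⟩ := Submodule.mem_sup.mp hs
    obtain ⟨a, rfl⟩ := Ideal.mem_span_singleton'.mp hr1
    obtain ⟨b, rfl⟩ := Ideal.mem_span_singleton'.mp hs1
    have hexp : (a * e + r2) * (b * (e - 1) + s2)
        = (a * b) * (x ^ N * x ^ N - x ^ N)
          + ((a * e + r2) * s2 + (b * (e - 1)) * r2) := by
      rw [hedef]; ring
    rw [hexp]
    exact add_mem (Ideal.mul_mem_left _ _ he)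
      (add_mem (Ideal.mul_mem_left _ _ hs2) (Ideal.mul_mem_left _ _ hr2))
  have hinf : I ⊓ J ≤ 𝔣 := by
    rw [← Ideal.mul_eq_inf_of_coprime htop]; exact hmul
  -- comaximality of the contractions, using spec bijectivity
  haveI : Algebra.IsIntegral ↥O (𝓞 K) := by
    refine ⟨fun z => ?_⟩
    have hz : IsIntegral ℤ z := Algebra.IsIntegral.isIntegral z
    exact IsIntegral.tower_top (A := ↥O) hz
  have hcomax : I.comap O.subtype ⊔ J.comap O.subtype = ⊤ := by
    by_contra hne
    obtain ⟨𝔪, h𝔪max, h𝔪⟩ := Ideal.exists_le_maximal _ hne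
    haveI := h𝔪max.isPrime
    have hIm : I.comap (algebraMap ↥O (𝓞 K)) ≤ 𝔪 := le_trans le_sup_left h𝔪
    have hJm : J.comap (algebraMap ↥O (𝓞 K)) ≤ 𝔪 := le_trans le_sup_right h𝔪
    obtain ⟨Q, hQI, hQprime, hQcomap⟩ :=
      Ideal.exists_ideal_over_prime_of_isIntegral 𝔪 I hIm
    obtain ⟨Q', hQ'J, hQ'prime, hQ'comap⟩ :=
      Ideal.exists_ideal_over_prime_of_isIntegral 𝔪 J hJm
    have hQne : Q ≠ ⊥ := fun hbot => hncast (by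
      have : ((n : ℤ) : 𝓞 K) ∈ Q := hQI (h𝔣I hn𝔣)
      simpa [hbot] using this)
    have hQ'ne : Q' ≠ ⊥ := fun hbot => hncast (by
      have : ((n : ℤ) : 𝓞 K) ∈ Q' := hQ'J (h𝔣J hn𝔣)
      simpa [hbot] using this)
    have hQQ' : Q = Q' := by
      refine hspec.injOn ⟨hQprime, hQne⟩ ⟨hQ'prime, hQ'ne⟩ ?_
      show Q.comap O.subtype = Q'.comap O.subtype
      calc Q.comap O.subtype = 𝔪 := hQcomap
        _ = Q'.comap O.subtype := hQ'comap.symm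
    have hle : (⊤ : Ideal (𝓞 K)) ≤ Q := htop ▸ sup_le hQI (hQQ' ▸ hQ'J)
    exact hQprime.ne_top (top_le_iff.mp hle)
  -- conclude
  obtain ⟨a, haI, b, hbJ, hab⟩ :=
    Submodule.mem_sup.mp ((Ideal.eq_top_iff_one _).mp hcomax)
  have haI' : (a : 𝓞 K) ∈ I := haI
  have hbJ' : (b : 𝓞 K) ∈ J := hbJ
  have hab' : (a : 𝓞 K) + (b : 𝓞 K) = 1 := by exact_mod_cast congrArg Subtype.val hab
  have hdiffJ : (a : 𝓞 K) - e ∈ J := by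
    have hrw : (a : 𝓞 K) - e = -(b : 𝓞 K) - (e - 1) := by linear_combination hab'
    rw [hrw]
    exact sub_mem (J.neg_mem hbJ') heJ
  have hdiff : (a : 𝓞 K) - e ∈ 𝔣 := hinf ⟨sub_mem haI' heI, hdiffJ⟩
  have : e = (a : 𝓞 K) - ((a : 𝓞 K) - e) := by ring
  rw [this]
  exact O.sub_mem a.2 (hfO _ hdiff)
end

section
/- Let 𝔭_1,…,𝔭_r be the distinct prime ideals of 𝒪 containing the conductor 𝔣, and for each i ∈ {1,…,r} let 𝔣_i be the product, over the prime ideals 𝔓 of 𝒪_K lying over 𝔭_i, of the exact power of 𝔓 occurring in the prime factorization of 𝔣 (so that 𝔣 = 𝔣_1···𝔣_r and the 𝔣_i are pairwise coprime). Then for each i the subring 𝒪_i = 𝒪 + 𝔣_i of 𝒪_K is an order in K whose conductor equals 𝔣_i, and 𝒪 = ⋂_{i=1}^{r} 𝒪_i. -/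
open NumberField

set_option synthInstance.maxHeartbeats 1000000
set_option maxHeartbeats 1000000

variable {K : Type*} [Field K] [NumberField K]

section IrredHelpers

lemma mem_conductorIdeal_iff {O : Subring (𝓞 K)} {x : 𝓞 K} :
    x ∈ conductorIdeal O ↔ ∀ y : 𝓞 K, x * y ∈ O := Iff.rfl

lemma mem_orderPlus_iff {O : Subring (𝓞 K)} {I : Ideal (𝓞 K)} {x : 𝓞 K} :
    x ∈ orderPlus O I ↔ ∃ a ∈ O, ∃ b ∈ I, x = a + b := Iff.rfl

lemma conductorIdeal_subset {O : Subring (𝓞 K)} {x : 𝓞 K} (hx : x ∈ conductorIdeal O) :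
    x ∈ O := by simpa using (mem_conductorIdeal_iff.mp hx) 1

lemma conductorIdeal_ne_bot (O : Subring (𝓞 K)) (hO : O.IsOrder) :
    conductorIdeal O ≠ ⊥ := by
  classical
  obtain ⟨s, hs⟩ := (Module.finite_def.mp (inferInstance : Module.Finite ℤ (𝓞 K)))
  set n : 𝓞 K → ℤ := fun g => (hO g).choose with hn
  have hnspec : ∀ g : 𝓞 K, n g ≠ 0 ∧ ((n g : 𝓞 K)) * g ∈ O := fun g => (hO g).choose_spec
  set N : ℤ := ∏ g ∈ s, n g with hN
  have hNne : N ≠ 0 := by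
    rw [hN, Finset.prod_ne_zero_iff]
    exact fun g _ => (hnspec g).1
  have hNmem : (N : 𝓞 K) ∈ conductorIdeal O := by
    rw [mem_conductorIdeal_iff]
    intro y
    have hy : y ∈ Submodule.span ℤ (s : Set (𝓞 K)) := by rw [hs]; exact Submodule.mem_top
    induction hy using Submodule.span_induction with
    | mem g hg =>
      have hfac : (N : 𝓞 K) =
          ((∏ x ∈ s.erase g, n x : ℤ) : 𝓞 K) * ((n g : 𝓞 K)) := by
        rw [hN, ← Finset.mul_prod_erase s n hg]; push_cast; ring
      rw [hfac, mul_assoc]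
      exact O.mul_mem (intCast_mem O _) (hnspec g).2
    | zero => simpa using O.zero_mem
    | add x y hx hy ihx ihy => rw [mul_add]; exact O.add_mem ihx ihy
    | smul a x hx ih =>
      rw [mul_smul_comm]
      exact zsmul_mem ih a
  intro h
  rw [h, Ideal.mem_bot] at hNmem
  exact hNne (by exact_mod_cast hNmem)

lemma mem_prod_of_forall_mem {R : Type*} [CommRing R] {ι : Type*} [DecidableEq ι]
    (f : ι → Ideal R) (s : Finset ι)
    (hc : ∀ i ∈ s, ∀ j ∈ s, i ≠ j → f i ⊔ f j = ⊤) {z : R}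
    (hz : ∀ i ∈ s, z ∈ f i) : z ∈ ∏ i ∈ s, f i := by
  classical
  induction s using Finset.induction_on with
  | empty => simp
  | @insert a t ha ih =>
    rw [Finset.prod_insert ha]
    have htop : f a ⊔ ∏ i ∈ t, f i = ⊤ :=
      Ideal.sup_prod_eq_top fun j hj =>
        hc a (Finset.mem_insert_self a t) j (Finset.mem_insert_of_mem hj)
          (fun h => ha (h ▸ hj))
    rw [Ideal.mul_eq_inf_of_coprime htop]
    exact Submodule.mem_inf.mpr ⟨hz a (Finset.mem_insert_self a t),
      ih (fun i hi j hj hij =>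
          hc i (Finset.mem_insert_of_mem hi) j (Finset.mem_insert_of_mem hj) hij)
        (fun i hi => hz i (Finset.mem_insert_of_mem hi))⟩

lemma one_sub_prod_mem {R : Type*} [CommRing R] {ι : Type*} (I : Ideal R)
    (s : Finset ι) (v : ι → R) (h : ∀ j ∈ s, 1 - v j ∈ I) :
    1 - ∏ j ∈ s, v j ∈ I := by
  classical
  induction s using Finset.induction_on with
  | empty => simp
  | @insert a t ha ih =>
    rw [Finset.prod_insert ha]
    have heq : 1 - v a * ∏ j ∈ t, v j
        = v a * (1 - ∏ j ∈ t, v j) + (1 - v a) := by ring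
    rw [heq]
    exact I.add_mem (I.mul_mem_left _ (ih fun j hj => h j (Finset.mem_insert_of_mem hj)))
      (h a (Finset.mem_insert_self a t))

end IrredHelpers

/-- Decomposition of an order into its irreducible components: if `𝔭_1, …, 𝔭_r` are the
prime ideals of `𝒪` containing the conductor `𝔣`, and `𝔣 = 𝔣_1 ⋯ 𝔣_r` with the `𝔣_i`
pairwise coprime and each `𝔣_i` a product of (exact powers of) the primes of `𝒪_K` lying
over `𝔭_i`, then each `𝒪_i = 𝒪 + 𝔣_i` is an order with conductor `𝔣_i`, and
`𝒪 = ⋂ᵢ 𝒪_i`. -/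
theorem irreducible_components (O : Subring (𝓞 K)) (hO : O.IsOrder)
    (r : ℕ) (p : Fin r → Ideal O) (hp : ∀ i, (p i).IsPrime)
    (hpinj : Function.Injective p)
    (hpall : ∀ q : Ideal O, q.IsPrime →
      ((conductorIdeal O).comap O.subtype ≤ q ↔ ∃ i, q = p i))
    (fi : Fin r → Ideal (𝓞 K))
    (hprod : conductorIdeal O = ∏ i, fi i)
    (hcop : ∀ i j, i ≠ j → fi i ⊔ fi j = ⊤)
    (hover : ∀ i, ∀ P : Ideal (𝓞 K), P.IsPrime → fi i ≤ P → P.comap O.subtype = p i) :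
    (∀ i, (orderPlus O (fi i)).IsOrder ∧ conductorIdeal (orderPlus O (fi i)) = fi i) ∧
      (⨅ i, orderPlus O (fi i)) = O := by
  classical
  have hfO : ∀ x ∈ conductorIdeal O, x ∈ O := fun x hx => conductorIdeal_subset hx
  have h𝔣bot : conductorIdeal O ≠ ⊥ := conductorIdeal_ne_bot O hO
  letI : Algebra.IsIntegral O (𝓞 K) :=
    ⟨fun x => IsIntegral.tower_top (R := ℤ) (Algebra.IsIntegral.isIntegral x)⟩
  -- the complementary products
  have h𝔣eq : ∀ i, fi i * ∏ j ∈ Finset.univ.erase i, fi j = conductorIdeal O := by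
    intro i
    rw [hprod, Finset.mul_prod_erase _ _ (Finset.mem_univ i)]
  have hle : ∀ i, conductorIdeal O ≤ fi i := by
    intro i
    rw [← h𝔣eq i]
    exact Ideal.mul_le_left
  -- C1 : lying over
  have hC1 : ∀ i j, (fi i).comap O.subtype ≤ p j → i = j := by
    intro i j hij
    haveI := hp j
    obtain ⟨P, hPI, hPp, hPc⟩ :=
      Ideal.exists_ideal_over_prime_of_isIntegral (R := O) (p j) (fi i) hij
    exact hpinj ((hover i P hPp hPI).symm.trans hPc)
  -- pairwise comaximality of the contracted ideals
  have hcomax : ∀ i j, i ≠ j →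
      (fi i).comap O.subtype ⊔ (fi j).comap O.subtype = ⊤ := by
    intro i j hij
    by_contra hne
    obtain ⟨m, hm, hlem⟩ := Ideal.exists_le_maximal _ hne
    have hmp : m.IsPrime := hm.isPrime
    have h1 : (conductorIdeal O).comap O.subtype ≤ m :=
      le_trans (Ideal.comap_mono (hle i)) (le_trans le_sup_left hlem)
    obtain ⟨k, hk⟩ := (hpall m hmp).mp h1
    have hik := hC1 i k (hk ▸ le_trans le_sup_left hlem)
    have hjk := hC1 j k (hk ▸ le_trans le_sup_right hlem)
    exact hij (hik.trans hjk.symm)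
  -- C2 : elements of O congruent to 1 mod fi i and 0 mod the others
  have hC2 : ∀ i, ∃ v : 𝓞 K, v ∈ O ∧
      v ∈ ∏ j ∈ Finset.univ.erase i, fi j ∧ 1 - v ∈ fi i := by
    intro i
    have hch : ∀ j : Fin r, ∃ w : 𝓞 K,
        i ≠ j → (w ∈ O ∧ w ∈ fi j ∧ 1 - w ∈ fi i) := by
      intro j
      by_cases hij : i = j
      · exact ⟨0, fun h => absurd hij h⟩
      · have h1 : (1 : O) ∈ (fi i).comap O.subtype ⊔ (fi j).comap O.subtype := by
          rw [hcomax i j hij]; exact Submodule.mem_top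
        obtain ⟨u, hu, w, hw, huw⟩ := Submodule.mem_sup.mp h1
        refine ⟨(w : 𝓞 K), fun _ => ⟨w.2, hw, ?_⟩⟩
        have : (1 : 𝓞 K) - (w : 𝓞 K) = (u : 𝓞 K) := by
          have : ((u + w : O) : 𝓞 K) = ((1 : O) : 𝓞 K) := by rw [huw]
          push_cast at this
          linear_combination -this
        rw [this]
        exact hu
    choose w hw using hch
    refine ⟨∏ j ∈ Finset.univ.erase i, w j, ?_, ?_, ?_⟩
    · exact Subring.prod_mem O fun j hj =>
        (hw j (Finset.ne_of_mem_erase hj).symm).1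
    · exact Ideal.prod_mem_prod fun j hj =>
        (hw j (Finset.ne_of_mem_erase hj).symm).2.1
    · exact one_sub_prod_mem _ _ _ fun j hj =>
        (hw j (Finset.ne_of_mem_erase hj).symm).2.2
  constructor
  · -- each O + fi i is an order with conductor fi i
    intro i
    obtain ⟨v, hvO, hvF, hvfi⟩ := hC2 i
    constructor
    · intro x
      obtain ⟨n, hn, hnx⟩ := hO x
      exact ⟨n, hn, le_orderPlus O (fi i) hnx⟩
    · apply le_antisymm
      · -- conductor of O + fi i is contained in fi i
        intro x hx
        have key : ∀ z ∈ ∏ j ∈ Finset.univ.erase i, fi j,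
            x * z ∈ conductorIdeal O := by
          intro z hz
          rw [mem_conductorIdeal_iff]
          intro y
          obtain ⟨a, ha, b, hb, hab⟩ :=
            mem_orderPlus_iff.mp ((mem_conductorIdeal_iff.mp hx) (z * y))
          have h1 : a * v ∈ O := O.mul_mem ha hvO
          have h2 : b * v ∈ O := hfO _ ((h𝔣eq i) ▸ Ideal.mul_mem_mul hb hvF)
          have h3 : x * (z * y * (1 - v)) ∈ O := by
            apply hfO
            refine Ideal.mul_mem_left _ x ?_
            rw [← h𝔣eq i, mul_comm (fi i)]
            exact Ideal.mul_mem_mul (Ideal.mul_mem_right y _ hz) hvfi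
          have heq : x * z * y = a * v + b * v + x * (z * y * (1 - v)) := by
            have : x * (z * y) * v = (a + b) * v := by rw [hab]
            linear_combination this
          rw [heq]
          exact O.add_mem (O.add_mem h1 h2) h3
        have hFne : (∏ j ∈ Finset.univ.erase i, fi j) ≠ 0 := by
          intro h
          exact h𝔣bot (by rw [← h𝔣eq i, h, mul_zero]; rfl)
        have hsple : Ideal.span {x} * (∏ j ∈ Finset.univ.erase i, fi j)
            ≤ fi i * ∏ j ∈ Finset.univ.erase i, fi j := by
          rw [h𝔣eq i]
          refine Ideal.mul_le.mpr ?_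
          intro c hc d hd
          obtain ⟨e, rfl⟩ := Ideal.mem_span_singleton'.mp hc
          have : e * x * d = x * (e * d) := by ring
          rw [this]
          exact key _ (Ideal.mul_mem_left _ e hd)
        have hdvd : fi i * (∏ j ∈ Finset.univ.erase i, fi j)
            ∣ Ideal.span {x} * ∏ j ∈ Finset.univ.erase i, fi j :=
          Ideal.dvd_iff_le.mpr hsple
        have hfin : fi i ∣ Ideal.span {x} :=
          (mul_dvd_mul_iff_right hFne).mp hdvd
        have := Ideal.dvd_iff_le.mp hfin
        rw [Ideal.span_le, Set.singleton_subset_iff] at this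
        exact this
      · -- fi i is contained in the conductor of O + fi i
        intro x hx
        rw [mem_conductorIdeal_iff]
        intro y
        exact mem_orderPlus_iff.mpr
          ⟨0, O.zero_mem, x * y, Ideal.mul_mem_right y _ hx, (zero_add _).symm⟩
  · -- the intersection of the O + fi i is O
    apply le_antisymm
    · intro x hx
      rw [Subring.mem_iInf] at hx
      have hdec : ∀ i, ∃ a ∈ O, ∃ b ∈ fi i, x = a + b :=
        fun i => mem_orderPlus_iff.mp (hx i)
      choose a ha b hb hxab using hdec
      choose v hvO hvF hvfi using hC2
      have hxs : ∀ i, x * v i ∈ O := by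
        intro i
        have h1 : a i * v i ∈ O := O.mul_mem (ha i) (hvO i)
        have h2 : b i * v i ∈ O :=
          hfO _ ((h𝔣eq i) ▸ Ideal.mul_mem_mul (hb i) (hvF i))
        have heq : x * v i = a i * v i + b i * v i := by
          rw [hxab i]; ring
        rw [heq]
        exact O.add_mem h1 h2
      have h1s : ∀ i, 1 - ∑ j, v j ∈ fi i := by
        intro i
        have heq : 1 - ∑ j, v j
            = (1 - v i) - ∑ j ∈ Finset.univ.erase i, v j := by
          rw [← Finset.add_sum_erase _ _ (Finset.mem_univ i)]; ring
        rw [heq]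
        refine Ideal.sub_mem _ (hvfi i) (Ideal.sum_mem _ ?_)
        intro j hj
        have hji : j ≠ i := Finset.ne_of_mem_erase hj
        have hsub : (∏ k ∈ Finset.univ.erase j, fi k) ≤ fi i := by
          rw [← Finset.mul_prod_erase _ _
            (Finset.mem_erase.mpr ⟨hji.symm, Finset.mem_univ i⟩)]
          exact Ideal.mul_le_left
        exact hsub (hvF j)
      have hs𝔣 : 1 - ∑ j, v j ∈ conductorIdeal O := by
        rw [hprod]
        exact mem_prod_of_forall_mem fi Finset.univ
          (fun i _ j _ hij => hcop i j hij) (fun i _ => h1s i)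
      have hxeq : x = (∑ i, x * v i) + x * (1 - ∑ j, v j) := by
        rw [← Finset.mul_sum]; ring
      rw [hxeq]
      exact O.add_mem (Subring.sum_mem O fun i _ => hxs i)
        (hfO _ (Ideal.mul_mem_left _ x hs𝔣))
    · intro x hx
      exact Subring.mem_iInf.mpr fun i => le_orderPlus O (fi i) hx
end

section
/- Suppose |Pic(𝒪_K)| ≤ 2 and 𝒪·𝒪_K^× = 𝒪_K. Then 𝒪 is half-factorial if and only if every irreducible element of 𝒪 is an irreducible element of 𝒪_K. -/
open NumberField
open UniqueFactorizationMonoid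
open scoped nonZeroDivisors

set_option synthInstance.maxHeartbeats 1000000
set_option maxHeartbeats 1000000

variable {K : Type*} [Field K] [NumberField K]

section Aux

lemma HF.factor_exact {R : Type*} [CommRing R] [IsDomain R] [WfDvdMonoid R] {d : R}
    (h0 : d ≠ 0) (hu : ¬ IsUnit d) :
    ∃ m : Multiset R, (∀ b ∈ m, Irreducible b) ∧ m.prod = d := by
  obtain ⟨f, hf, w, hw⟩ := WfDvdMonoid.exists_factors d h0
  rcases eq_or_ne f 0 with rfl | hf0
  · exact absurd (by rw [← hw]; simp) hu
  obtain ⟨b, hbf⟩ := Multiset.exists_mem_of_ne_zero hf0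
  obtain ⟨f', rfl⟩ := Multiset.exists_cons_of_mem hbf
  refine ⟨(↑w * b) ::ₘ f', ?_, ?_⟩
  · intro x hx
    rcases Multiset.mem_cons.mp hx with rfl | hx
    · exact (Associated.irreducible ⟨w, mul_comm b ↑w⟩ (hf b hbf))
    · exact hf x (Multiset.mem_cons_of_mem hx)
  · rw [Multiset.prod_cons] at hw ⊢
    rw [← hw]; ring

end Aux


lemma two_elt_group_lemma {G : Type*} [Group G] [Finite G] (hcard : Nat.card G ≤ 2)
    {g h : G} (hg : g ≠ 1) (hh : h ≠ 1) : g * h = 1 := by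
  by_contra hgh
  have := Fintype.ofFinite G
  classical
  have h3 : ({1, g, g * h} : Finset G).card = 3 := by
    rw [Finset.card_insert_of_notMem, Finset.card_insert_of_notMem, Finset.card_singleton]
    · simp only [Finset.mem_singleton]
      intro h'
      apply hh
      have : g * h = g * 1 := by simpa using h'.symm
      exact mul_left_cancel this
    · simp only [Finset.mem_insert, Finset.mem_singleton]
      push_neg
      exact ⟨Ne.symm hg, Ne.symm hgh⟩
  have : 3 ≤ Nat.card G := by
    rw [Nat.card_eq_fintype_card, ← Finset.card_univ, ← h3]
    exact Finset.card_le_card (Finset.subset_univ _)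
  omega

section Carlitz

variable {R : Type*} [CommRing R] [IsDedekindDomain R]

open Classical in
noncomputable def lenf (a : R) : ℕ :=
  ((normalizedFactors (Ideal.span {a})).map
    (fun P => if P.IsPrincipal then 2 else 1)).sum

lemma lenf_mul {a b : R} (ha : a ≠ 0) (hb : b ≠ 0) : lenf (a * b) = lenf a + lenf b := by
  classical
  unfold lenf
  rw [← Ideal.span_singleton_mul_span_singleton,
    normalizedFactors_mul (by simpa using ha) (by simpa using hb),
    Multiset.map_add, Multiset.sum_add]

lemma lenf_unit {a : R} (ha : IsUnit a) : lenf a = 0 := by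
  unfold lenf
  rw [show Ideal.span {a} = (1 : Ideal R) from by
      rw [Ideal.one_eq_top]; exact Ideal.span_singleton_eq_top.mpr ha,
    normalizedFactors_one]
  simp

end Carlitz

section Carlitz2
variable {R : Type*} [CommRing R] [IsDedekindDomain R]

lemma Ideal.normalize_eq' (P : Ideal R) : normalize P = P :=
  associated_iff_eq.mp (normalize_associated P)

lemma lenf_irreducible [Finite (ClassGroup R)] (hcard : Nat.card (ClassGroup R) ≤ 2)
    {π : R} (hπ : Irreducible π) : lenf π = 2 := by
  classical
  have hπ0 : π ≠ 0 := hπ.ne_zero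
  set I : Ideal R := Ideal.span {π} with hIdef
  have hIbot : I ≠ ⊥ := by simpa [hIdef] using hπ0
  have hItop : I ≠ ⊤ := by
    simpa [hIdef, Ideal.span_singleton_eq_top] using hπ.not_isUnit
  have hprod : (normalizedFactors I).prod = I := prod_normalizedFactors_eq_self hIbot
  have key : ∀ J : Ideal R, J ∣ I → J ≠ ⊤ → J.IsPrincipal → I = J := by
    intro J hJI hJtop hJp
    obtain ⟨d, rfl⟩ := hJp
    have hd : d ∣ π := by
      rw [← Ideal.mem_span_singleton]
      exact Ideal.le_of_dvd hJI (Ideal.subset_span rfl)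
    obtain ⟨c, hc⟩ := hd
    rcases hπ.isUnit_or_isUnit hc with h | h
    · exact absurd (Ideal.span_singleton_eq_top.mpr h) hJtop
    · rw [hIdef]
      exact (Ideal.span_singleton_eq_span_singleton.mpr ⟨h.unit, by rw [hc]; simp⟩).symm
  have hsne : normalizedFactors I ≠ 0 := by
    intro h
    rw [h, Multiset.prod_zero, Ideal.one_eq_top] at hprod
    exact hItop hprod.symm
  obtain ⟨P, hPmem⟩ := Multiset.exists_mem_of_ne_zero hsne
  obtain ⟨t, hst⟩ := Multiset.exists_cons_of_mem hPmem
  have hPprime : Prime P := prime_of_normalized_factor P hPmem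
  have hPtop : P ≠ ⊤ := fun h => hPprime.not_unit (Ideal.isUnit_iff.mpr h)
  rcases eq_or_ne t 0 with rfl | ht0
  · -- single prime factor: I = P is principal
    have hIP : I = P := by rw [← hprod, hst]; simp
    unfold lenf
    rw [← hIdef, hst]
    simp only [Multiset.map_cons, Multiset.map_zero, Multiset.sum_cons, Multiset.sum_zero]
    rw [if_pos (hIP ▸ ⟨π, rfl⟩)]
    omega
  · obtain ⟨Q, hQt⟩ := Multiset.exists_mem_of_ne_zero ht0
    obtain ⟨r, htr⟩ := Multiset.exists_cons_of_mem hQt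
    have hQmem : Q ∈ normalizedFactors I := by rw [hst, htr]; simp
    have hQprime : Prime Q := prime_of_normalized_factor Q hQmem
    have hQtop : Q ≠ ⊤ := fun h => hQprime.not_unit (Ideal.isUnit_iff.mpr h)
    -- no member of normalizedFactors I is principal
    have hnp : ∀ J ∈ normalizedFactors I, ¬ J.IsPrincipal := by
      intro J hJmem hJp
      have hJprime : Prime J := prime_of_normalized_factor J hJmem
      have hJtop : J ≠ ⊤ := fun h => hJprime.not_unit (Ideal.isUnit_iff.mpr h)
      have hIJ : I = J := key J (dvd_of_mem_normalizedFactors hJmem) hJtop hJp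
      have : normalizedFactors I = {J} := by
        rw [hIJ, normalizedFactors_irreducible hJprime.irreducible, Ideal.normalize_eq']
      rw [hst, htr] at this
      have hcc := congrArg Multiset.card this
      simp at hcc
    have hPnp : ¬ P.IsPrincipal := hnp P hPmem
    have hQnp : ¬ Q.IsPrincipal := hnp Q hQmem
    have hPmem0 : P ∈ (Ideal R)⁰ := mem_nonZeroDivisors_of_ne_zero hPprime.ne_zero
    have hQmem0 : Q ∈ (Ideal R)⁰ := mem_nonZeroDivisors_of_ne_zero hQprime.ne_zero
    have hg : ClassGroup.mk0 ⟨P, hPmem0⟩ ≠ 1 := fun h => hPnp ((ClassGroup.mk0_eq_one_iff _).mp h)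
    have hh : ClassGroup.mk0 ⟨Q, hQmem0⟩ ≠ 1 := fun h => hQnp ((ClassGroup.mk0_eq_one_iff _).mp h)
    have hone : ClassGroup.mk0 ((⟨P, hPmem0⟩ : (Ideal R)⁰) * (⟨Q, hQmem0⟩ : (Ideal R)⁰)) = 1 := by
      rw [map_mul]; exact two_elt_group_lemma hcard hg hh
    have hPQp : (P * Q).IsPrincipal := (ClassGroup.mk0_eq_one_iff _).mp hone
    have hPQdvd : P * Q ∣ I := by
      refine ⟨r.prod, ?_⟩
      rw [← hprod, hst, htr]
      simp [Multiset.prod_cons, mul_assoc]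
    have hPQtop : P * Q ≠ ⊤ := by
      intro h
      exact hPtop (top_le_iff.mp (h ▸ Ideal.mul_le_left (I := P) (J := Q)))
    have hIPQ : I = P * Q := key _ hPQdvd hPQtop hPQp
    have hnfPQ : normalizedFactors I = {P, Q} := by
      rw [hIPQ, normalizedFactors_mul hPprime.ne_zero hQprime.ne_zero,
        normalizedFactors_irreducible hPprime.irreducible,
        normalizedFactors_irreducible hQprime.irreducible,
        Ideal.normalize_eq', Ideal.normalize_eq']
      rfl
    unfold lenf
    rw [← hIdef, hnfPQ]
    simp only [Multiset.insert_eq_cons, Multiset.map_cons, Multiset.map_singleton,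
      Multiset.sum_cons, Multiset.sum_singleton]
    rw [if_neg hPnp, if_neg hQnp]

lemma lenf_prod_irreducible [Finite (ClassGroup R)] (hcard : Nat.card (ClassGroup R) ≤ 2)
    (l : Multiset R) (hl : ∀ b ∈ l, Irreducible b) :
    lenf l.prod = 2 * Multiset.card l := by
  induction l using Multiset.induction_on with
  | empty => simpa using lenf_unit isUnit_one
  | cons b s ih =>
    have hb : Irreducible b := hl b (Multiset.mem_cons_self b s)
    have hs : ∀ x ∈ s, Irreducible x := fun x hx => hl x (Multiset.mem_cons_of_mem hx)
    have hs0 : s.prod ≠ 0 := Multiset.prod_ne_zero (fun h => (hs 0 h).ne_zero rfl)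
    rw [Multiset.prod_cons, lenf_mul hb.ne_zero hs0, lenf_irreducible hcard hb, ih hs,
      Multiset.card_cons]
    ring
end Carlitz2


lemma exists_int_all_mul_mem (O : Subring (𝓞 K)) (hO : O.IsOrder) :
    ∃ N : ℤ, N ≠ 0 ∧ ∀ x : 𝓞 K, (N : 𝓞 K) * x ∈ O := by
  classical
  choose n hn hmem using hO
  obtain ⟨s, hs⟩ := Module.finite_def.mp (inferInstance : Module.Finite ℤ (𝓞 K))
  refine ⟨∏ x ∈ s, n x, Finset.prod_ne_zero_iff.mpr (fun x _ => hn x), ?_⟩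
  intro x
  have hx : x ∈ Submodule.span ℤ (s : Set (𝓞 K)) := by rw [hs]; trivial
  induction hx using Submodule.span_induction with
  | mem y hy =>
    obtain ⟨c, hc⟩ := Finset.dvd_prod_of_mem n hy
    rw [hc]
    push_cast
    rw [mul_comm ((n y : 𝓞 K)) ((c : 𝓞 K)), mul_assoc]
    exact O.mul_mem (intCast_mem O c) (hmem y)
  | zero => simpa using O.zero_mem
  | add y z _ _ hy hz => rw [mul_add]; exact O.add_mem hy hz
  | smul z y _ hy =>
    rw [zsmul_eq_mul, mul_left_comm]
    exact O.mul_mem (intCast_mem O z) hy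

lemma exists_unit_pow_mem (O : Subring (𝓞 K)) (hO : O.IsOrder) (u : (𝓞 K)ˣ) :
    ∃ (m : ℕ) (v : Oˣ), 0 < m ∧ ((v : O) : 𝓞 K) = (u : 𝓞 K) ^ m := by
  obtain ⟨N, hN, hNO⟩ := exists_int_all_mul_mem O hO
  have hN0 : (N : 𝓞 K) ≠ 0 := Int.cast_ne_zero.mpr hN
  have hIbot : Ideal.span {(N : 𝓞 K)} ≠ ⊥ := by
    simpa [Ideal.span_singleton_eq_bot] using hN0
  haveI := Ideal.finiteQuotientOfFreeOfNeBot _ hIbot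
  set f := (Ideal.Quotient.mk (Ideal.span {(N : 𝓞 K)})).toMonoidHom with hf
  have hm0 : 0 < orderOf (Units.map f u) := orderOf_pos _
  have key : ∀ w : (𝓞 K)ˣ, (Units.map f w) ^ orderOf (Units.map f u) = 1 →
      (w : 𝓞 K) ^ orderOf (Units.map f u) ∈ O := by
    intro w hw
    have h1 : Ideal.Quotient.mk (Ideal.span {(N : 𝓞 K)}) ((w : 𝓞 K) ^ orderOf (Units.map f u))
        = Ideal.Quotient.mk (Ideal.span {(N : 𝓞 K)}) 1 := by
      have h2 := congrArg (Units.val) hw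
      simpa [hf, Units.val_pow_eq_pow_val, map_one] using h2
    have hmem := Ideal.Quotient.eq.mp h1
    obtain ⟨t, ht⟩ := Ideal.mem_span_singleton'.mp hmem
    have heq : (w : 𝓞 K) ^ orderOf (Units.map f u) = 1 + (N : 𝓞 K) * t := by
      linear_combination -ht
    rw [heq]
    exact O.add_mem O.one_mem (hNO t)
  have h1 : (u : 𝓞 K) ^ orderOf (Units.map f u) ∈ O := key u (pow_orderOf_eq_one _)
  have h2 : ((u⁻¹ : (𝓞 K)ˣ) : 𝓞 K) ^ orderOf (Units.map f u) ∈ O := by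
    apply key
    rw [map_inv, inv_pow, pow_orderOf_eq_one, inv_one]
  refine ⟨orderOf (Units.map f u),
    ⟨⟨(u : 𝓞 K) ^ orderOf (Units.map f u), h1⟩,
     ⟨((u⁻¹ : (𝓞 K)ˣ) : 𝓞 K) ^ orderOf (Units.map f u), h2⟩, ?_, ?_⟩, hm0, rfl⟩
  · apply Subtype.ext
    push_cast
    rw [← mul_pow]
    simp
  · apply Subtype.ext
    push_cast
    rw [← mul_pow]
    simp

lemma order_isNoetherianRing (O : Subring (𝓞 K)) : IsNoetherianRing O := by
  have h1 : IsNoetherian ℤ (𝓞 K) := inferInstance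
  have h2 : IsNoetherian ℤ O :=
    isNoetherian_of_injective O.subtype.toAddMonoidHom.toIntLinearMap Subtype.val_injective
  have h3 : IsNoetherian O O := isNoetherian_of_tower ℤ h2
  exact isNoetherianRing_iff.mpr h3


/-- **Lemma 4.3.** If `|Pic 𝒪_K| ≤ 2` and `𝒪 · 𝒪_K^× = 𝒪_K`, then `𝒪` is half-factorial
if and only if every irreducible element of `𝒪` is an irreducible element of `𝒪_K`. -/
theorem isHalfFactorial_iff_irreducible_mem_irreducible (O : Subring (𝓞 K)) (hO : O.IsOrder)
    (hPic : Nat.card (ClassGroup (𝓞 K)) ≤ 2)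
    (hU : ∀ x : 𝓞 K, ∃ (ε : (𝓞 K)ˣ) (a : 𝓞 K), a ∈ O ∧ x = ε * a) :
    IsHalfFactorialRing O ↔ ∀ a : O, Irreducible a → Irreducible (a : 𝓞 K) := by
  classical
  haveI : IsNoetherianRing O := order_isNoetherianRing O
  have hatomic : ∀ d : O, d ≠ 0 → ¬ IsUnit d →
      ∃ m : Multiset O, (∀ b ∈ m, Irreducible b) ∧ m.prod = d :=
    fun d h0 hu => HF.factor_exact h0 hu
  constructor
  · rintro ⟨hex, huniq⟩ a ha
    have ha0 : a ≠ 0 := ha.ne_zero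
    have ha0' : (a : 𝓞 K) ≠ 0 := fun h => ha0 (Subtype.ext h)
    have hanu : ¬ IsUnit (a : 𝓞 K) := by
      rintro ⟨u, hu⟩
      obtain ⟨m, v, hm, hv⟩ := exists_unit_pow_mem O hO u
      have hav : a ^ m = (v : O) := by
        apply Subtype.ext
        push_cast
        rw [hv, hu]
      exact ha.not_isUnit (isUnit_of_dvd_unit (dvd_pow_self a hm.ne') (hav ▸ v.isUnit))
    refine ⟨hanu, fun x y hxy => ?_⟩
    by_contra hcon
    push_neg at hcon
    obtain ⟨hx, hy⟩ := hcon
    have hx0 : x ≠ 0 := by rintro rfl; rw [zero_mul] at hxy; exact ha0' hxy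
    have hy0 : y ≠ 0 := by rintro rfl; rw [mul_zero] at hxy; exact ha0' hxy
    obtain ⟨ε, b, hb, hxb⟩ := hU x
    obtain ⟨δ, c, hc, hyc⟩ := hU y
    obtain ⟨m, v, hm, hv⟩ := exists_unit_pow_mem O hO (ε * δ)
    obtain ⟨k, rfl⟩ := Nat.exists_eq_succ_of_ne_zero hm.ne'
    set B : O := ⟨b, hb⟩ with hB
    set C : O := ⟨c, hc⟩ with hC
    have hB0 : B ≠ 0 := by
      rintro h
      apply hx0
      rw [hxb, show b = (0 : 𝓞 K) from congrArg Subtype.val h, mul_zero]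
    have hC0 : C ≠ 0 := by
      rintro h
      apply hy0
      rw [hyc, show c = (0 : 𝓞 K) from congrArg Subtype.val h, mul_zero]
    have hBnu : ¬ IsUnit B := by
      intro h
      apply hx
      rw [hxb]
      exact (Units.isUnit_units_mul ε b).mpr (h.map O.subtype)
    have hCnu : ¬ IsUnit C := by
      intro h
      apply hy
      rw [hyc]
      exact (Units.isUnit_units_mul δ c).mpr (h.map O.subtype)
    have hvBnu : ¬ IsUnit ((v : O) * B) := by
      intro h
      exact hBnu ((Units.isUnit_units_mul v B).mp h)
    have hvB0 : (v : O) * B ≠ 0 := mul_ne_zero (fun h => by simpa [h] using v.ne_zero) hB0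
    obtain ⟨m₁, hm₁, hm₁p⟩ := hatomic _ hvB0 hvBnu
    obtain ⟨mB, hmB, hmBp⟩ := hatomic _ hB0 hBnu
    obtain ⟨mC, hmC, hmCp⟩ := hatomic _ hC0 hCnu
    set L : Multiset O := m₁ + k • mB + (k + 1) • mC with hL
    have hLirr : ∀ x ∈ L, Irreducible x := by
      intro x hxL
      rw [hL] at hxL
      rcases Multiset.mem_add.mp hxL with hxL | hxL
      · rcases Multiset.mem_add.mp hxL with hxL | hxL
        · exact hm₁ x hxL
        · exact hmB x (Multiset.mem_of_mem_nsmul hxL)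
      · exact hmC x (Multiset.mem_of_mem_nsmul hxL)
    have hLprod : L.prod = a ^ (k + 1) := by
      apply Subtype.ext
      rw [hL]
      rw [Multiset.prod_add, Multiset.prod_add, Multiset.prod_nsmul, Multiset.prod_nsmul,
        hm₁p, hmBp, hmCp]
      push_cast
      rw [hv, hxy, hxb, hyc]
      push_cast
      simp only [pow_succ]
      ring
    have hak0 : a ^ (k + 1) ≠ 0 := pow_ne_zero _ ha0
    have haknu : ¬ IsUnit (a ^ (k + 1)) :=
      fun h => ha.not_isUnit (isUnit_of_dvd_unit (dvd_pow_self a (Nat.succ_ne_zero k)) h)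
    have hrep : ∀ x ∈ Multiset.replicate (k + 1) a, Irreducible x :=
      fun x hx => (Multiset.eq_of_mem_replicate hx) ▸ ha
    have hcards := huniq (a ^ (k + 1)) hak0 haknu (Multiset.replicate (k + 1) a) L
      hrep hLirr (by rw [Multiset.prod_replicate]) hLprod
    rw [Multiset.card_replicate, hL] at hcards
    have h1 : 1 ≤ Multiset.card m₁ := by
      rcases eq_or_ne m₁ 0 with h | h
      · exact absurd (by rw [← hm₁p, h]; simp) hvBnu
      · exact Multiset.card_pos.mpr h
    have h2 : 1 ≤ Multiset.card mB := by
      rcases eq_or_ne mB 0 with h | h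
      · exact absurd (by rw [← hmBp, h]; simp) hBnu
      · exact Multiset.card_pos.mpr h
    have h3 : 1 ≤ Multiset.card mC := by
      rcases eq_or_ne mC 0 with h | h
      · exact absurd (by rw [← hmCp, h]; simp) hCnu
      · exact Multiset.card_pos.mpr h
    rw [Multiset.card_add, Multiset.card_add, Multiset.card_nsmul, Multiset.card_nsmul] at hcards
    nlinarith
  · intro hirr
    refine ⟨fun d h0 hu => hatomic d h0 hu, ?_⟩
    intro d hd0 hdu l₁ l₂ h1 h2 hp1 hp2
    have key : ∀ l : Multiset O, (∀ b ∈ l, Irreducible b) → l.prod = d →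
        2 * Multiset.card l = lenf ((d : O) : 𝓞 K) := by
      intro l hl hlp
      have hprod : (l.map (O.subtype : O →+* 𝓞 K)).prod = ((d : O) : 𝓞 K) := by
        rw [← hlp]
        exact (map_multiset_prod (O.subtype : O →+* 𝓞 K) l).symm
      have := lenf_prod_irreducible hPic (l.map (O.subtype : O →+* 𝓞 K)) ?_
      · rw [hprod] at this
        rw [this, Multiset.card_map]
      · intro x hxm
        obtain ⟨z, hz, rfl⟩ := Multiset.mem_map.mp hxm
        exact hirr z (hl z hz)
    have e1 := key l₁ h1 hp1
    have e2 := key l₂ h2 hp2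
    omega
end

section
/- Suppose 𝒪_K is a principal ideal domain, 𝒪 is half-factorial, and the spec-map is bijective. Then 𝒪·𝒪_K^× = 𝒪_K. -/
open NumberField

set_option synthInstance.maxHeartbeats 1000000
set_option maxHeartbeats 1000000

variable {K : Type*} [Field K] [NumberField K]

/-! ### Auxiliary development for the proof -/

section HFAux

open UniqueFactorizationMonoid

open Classical in
/-- Length of a factorization into irreducibles (junk value if none exists). -/
noncomputable def hfLen {R : Type*} [CommRing R] (a : R) : ℕ :=
  if h : ∃ l : Multiset R, (∀ b ∈ l, Irreducible b) ∧ l.prod = a then h.choose.card else 0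

variable {R : Type*} [CommRing R] [IsDomain R]

lemma hf_factorization_of_unit {a : R} (ha : IsUnit a) {l : Multiset R}
    (hl : ∀ b ∈ l, Irreducible b) (hp : l.prod = a) : l = 0 := by
  by_contra h
  obtain ⟨b, hb⟩ := Multiset.exists_mem_of_ne_zero h
  exact (hl b hb).not_isUnit (isUnit_of_dvd_unit (hp ▸ Multiset.dvd_prod hb) ha)

lemma hfLen_unit {a : R} (ha : IsUnit a) : hfLen a = 0 := by
  unfold hfLen
  split_ifs with h
  · have := hf_factorization_of_unit ha h.choose_spec.1 h.choose_spec.2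
    simp [this]
  · rfl

lemma hfLen_eq (hhf : IsHalfFactorialRing R) {a : R} (h0 : a ≠ 0) {l : Multiset R}
    (hl : ∀ b ∈ l, Irreducible b) (hp : l.prod = a) : Multiset.card l = hfLen a := by
  by_cases hu : IsUnit a
  · rw [hfLen_unit hu, hf_factorization_of_unit hu hl hp]
    rfl
  · have hex : ∃ l : Multiset R, (∀ b ∈ l, Irreducible b) ∧ l.prod = a := ⟨l, hl, hp⟩
    rw [hfLen, dif_pos hex]
    exact hhf.2 a h0 hu l hex.choose hl hex.choose_spec.1 hp hex.choose_spec.2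

lemma hfLen_spec (hhf : IsHalfFactorialRing R) {a : R} (h0 : a ≠ 0) (hu : ¬ IsUnit a) :
    ∃ l : Multiset R, (∀ b ∈ l, Irreducible b) ∧ l.prod = a ∧ Multiset.card l = hfLen a := by
  obtain ⟨l, hl, hp⟩ := hhf.1 a h0 hu
  exact ⟨l, hl, hp, hfLen_eq hhf h0 hl hp⟩

lemma hfLen_pos (hhf : IsHalfFactorialRing R) {a : R} (h0 : a ≠ 0) (hu : ¬ IsUnit a) :
    1 ≤ hfLen a := by
  obtain ⟨l, hl, hp, hc⟩ := hfLen_spec hhf h0 hu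
  rw [← hc]
  refine Multiset.card_pos.mpr ?_
  rintro rfl
  exact hu (hp ▸ isUnit_one)

lemma hfLen_unit_mul (hhf : IsHalfFactorialRing R) {a b : R} (hua : IsUnit a) (hb : b ≠ 0) :
    hfLen (a * b) = hfLen b := by
  by_cases hub : IsUnit b
  · rw [hfLen_unit hub, hfLen_unit (hua.mul hub)]
  · have ha : a ≠ 0 := hua.ne_zero
    have hab0 : a * b ≠ 0 := mul_ne_zero ha hb
    have habu : ¬ IsUnit (a * b) := fun h => hub (isUnit_of_dvd_unit (dvd_mul_left b a) h)
    obtain ⟨l, hl, hp, hc⟩ := hfLen_spec hhf hb hub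
    have hl0 : l ≠ 0 := by
      rintro rfl
      exact hub (hp ▸ isUnit_one)
    obtain ⟨c, hcmem⟩ := Multiset.exists_mem_of_ne_zero hl0
    obtain ⟨l', rfl⟩ := Multiset.exists_cons_of_mem hcmem
    have hprod : ((a * c) ::ₘ l').prod = a * b := by
      rw [Multiset.prod_cons, mul_assoc, ← Multiset.prod_cons, hp]
    have hirr : ∀ d ∈ (a * c) ::ₘ l', Irreducible d := by
      intro d hd
      rcases Multiset.mem_cons.1 hd with rfl | hd
      · exact (irreducible_isUnit_mul hua).2 (hl c (Multiset.mem_cons_self c l'))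
      · exact hl d (Multiset.mem_cons_of_mem hd)
    have := hfLen_eq hhf hab0 hirr hprod
    rw [← this, ← hc]
    simp

lemma hfLen_mul (hhf : IsHalfFactorialRing R) {a b : R} (ha : a ≠ 0) (hb : b ≠ 0) :
    hfLen (a * b) = hfLen a + hfLen b := by
  by_cases hua : IsUnit a
  · rw [hfLen_unit_mul hhf hua hb, hfLen_unit hua, zero_add]
  · by_cases hub : IsUnit b
    · rw [mul_comm, hfLen_unit_mul hhf hub ha, hfLen_unit hub, add_zero]
    · obtain ⟨l₁, h₁, p₁, c₁⟩ := hfLen_spec hhf ha hua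
      obtain ⟨l₂, h₂, p₂, c₂⟩ := hfLen_spec hhf hb hub
      have hab0 : a * b ≠ 0 := mul_ne_zero ha hb
      have hprod : (l₁ + l₂).prod = a * b := by rw [Multiset.prod_add, p₁, p₂]
      have hirr : ∀ d ∈ l₁ + l₂, Irreducible d := by
        intro d hd
        rcases Multiset.mem_add.1 hd with h | h
        exacts [h₁ d h, h₂ d h]
      have := hfLen_eq hhf hab0 hirr hprod
      rw [← this, ← c₁, ← c₂, Multiset.card_add]

end HFAux

section WAux

open UniqueFactorizationMonoid

variable {K : Type*} [Field K] [NumberField K]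

lemma mkO_ne_zero {O : Subring (𝓞 K)} {v : 𝓞 K} (hv : v ∈ O) (h : v ≠ 0) :
    (⟨v, hv⟩ : O) ≠ 0 := by
  simp only [ne_eq, Subtype.ext_iff, ZeroMemClass.coe_zero]
  exact h

/-- The weight function `W(x) = ℓ(f·x) - ℓ(f)`. -/
noncomputable def Wt (O : Subring (𝓞 K)) (f : 𝓞 K) (hf : ∀ y, f * y ∈ O) (x : 𝓞 K) : ℤ :=
  (hfLen (⟨f * x, hf x⟩ : O) : ℤ) - (hfLen (⟨f * 1, hf 1⟩ : O) : ℤ)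

variable {O : Subring (𝓞 K)} {f : 𝓞 K} (hf : ∀ y, f * y ∈ O) (hf0 : f ≠ 0)
  (hhf : IsHalfFactorialRing O)

lemma Wt_one : Wt O f hf 1 = 0 := sub_self _

lemma Wt_lower (x : 𝓞 K) :
    -(hfLen (⟨f * 1, hf 1⟩ : O) : ℤ) ≤ Wt O f hf x := by
  unfold Wt
  have := Int.natCast_nonneg (hfLen (⟨f * x, hf x⟩ : O))
  omega

include hf hf0 hhf

lemma Wt_mul {x y : 𝓞 K} (hx : x ≠ 0) (hy : y ≠ 0) :
    Wt O f hf (x * y) = Wt O f hf x + Wt O f hf y := by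
  have key : (⟨f * x, hf x⟩ : O) * ⟨f * y, hf y⟩ = ⟨f * 1, hf 1⟩ * ⟨f * (x * y), hf (x * y)⟩ := by
    apply Subtype.ext
    push_cast
    ring
  have h2 := hfLen_mul hhf (mkO_ne_zero (hf x) (mul_ne_zero hf0 hx))
    (mkO_ne_zero (hf y) (mul_ne_zero hf0 hy))
  have h3 := hfLen_mul hhf (mkO_ne_zero (hf 1) (by simpa using hf0))
    (mkO_ne_zero (hf (x * y)) (mul_ne_zero hf0 (mul_ne_zero hx hy)))
  rw [key, h3] at h2
  unfold Wt
  omega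

lemma Wt_pow {x : 𝓞 K} (hx : x ≠ 0) (n : ℕ) :
    Wt O f hf (x ^ n) = n * Wt O f hf x := by
  induction n with
  | zero => simpa using Wt_one (O := O) (f := f) hf
  | succ n ih =>
    rw [pow_succ, Wt_mul hf hf0 hhf (pow_ne_zero _ hx) hx, ih]
    push_cast
    ring

lemma Wt_nonneg {x : 𝓞 K} (hx : x ≠ 0) : 0 ≤ Wt O f hf x := by
  by_contra h
  push_neg at h
  set m : ℕ := hfLen (⟨f * 1, hf 1⟩ : O) with hm
  have h1 : Wt O f hf x ≤ -1 := by omega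
  have h2 := Wt_pow hf hf0 hhf hx (m + 1)
  have h3 := Wt_lower hf (x ^ (m + 1))
  rw [← hm] at h3
  have h4 : ((m : ℤ) + 1) * Wt O f hf x ≤ ((m : ℤ) + 1) * (-1) := by
    apply mul_le_mul_of_nonneg_left h1
    positivity
  rw [h2] at h3
  push_cast at h3 h4
  omega

lemma Wt_isUnit {x : 𝓞 K} (hu : IsUnit x) : Wt O f hf x = 0 := by
  obtain ⟨u, rfl⟩ := hu
  have h1 : ((u : 𝓞 K)) ≠ 0 := u.ne_zero
  have h2 : ((↑u⁻¹ : 𝓞 K)) ≠ 0 := u⁻¹.ne_zero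
  have h3 := Wt_mul hf hf0 hhf h1 h2
  rw [Units.mul_inv, Wt_one] at h3
  have n1 := Wt_nonneg hf hf0 hhf h1
  have n2 := Wt_nonneg hf hf0 hhf h2
  omega

lemma Wt_mem {a : 𝓞 K} (ha : a ∈ O) (h0 : a ≠ 0) :
    Wt O f hf a = hfLen (⟨a, ha⟩ : O) := by
  have key : (⟨f * a, hf a⟩ : O) = ⟨f * 1, hf 1⟩ * ⟨a, ha⟩ := by
    apply Subtype.ext
    push_cast
    ring
  unfold Wt
  rw [key, hfLen_mul hhf (mkO_ne_zero (hf 1) (by simpa using hf0)) (mkO_ne_zero ha h0)]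
  push_cast
  ring

lemma Wt_assoc {x y : 𝓞 K} (h : Associated x y) (hx : x ≠ 0) :
    Wt O f hf x = Wt O f hf y := by
  obtain ⟨u, rfl⟩ := h
  rw [Wt_mul hf hf0 hhf hx u.ne_zero, Wt_isUnit hf hf0 hhf u.isUnit]
  ring

lemma Wt_prod (l : Multiset (𝓞 K)) (h : ∀ b ∈ l, b ≠ 0) :
    Wt O f hf l.prod = (l.map (Wt O f hf)).sum := by
  induction l using Multiset.induction with
  | empty => simpa using Wt_one (O := O) (f := f) hf
  | cons a t ih =>
    have ha : a ≠ 0 := h a (Multiset.mem_cons_self a t)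
    have ht : ∀ b ∈ t, b ≠ 0 := fun b hb => h b (Multiset.mem_cons_of_mem hb)
    have ht0 : t.prod ≠ 0 := Multiset.prod_ne_zero (fun h0 => ht 0 h0 rfl)
    rw [Multiset.prod_cons, Wt_mul hf hf0 hhf ha ht0, Multiset.map_cons,
      Multiset.sum_cons, ih ht]

lemma Wt_exists_prime (hPID : IsPrincipalIdealRing (𝓞 K)) {x : 𝓞 K} (hx : x ≠ 0)
    (h1 : 1 ≤ Wt O f hf x) :
    ∃ σ : 𝓞 K, Prime σ ∧ σ ∣ x ∧ 1 ≤ Wt O f hf σ := by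
  haveI := hPID
  by_contra hc
  push_neg at hc
  obtain ⟨u, hu⟩ := UniqueFactorizationMonoid.factors_prod hx
  have hall : ∀ σ ∈ UniqueFactorizationMonoid.factors x, Wt O f hf σ = 0 := by
    intro σ hσ
    have hp := UniqueFactorizationMonoid.prime_of_factor σ hσ
    have hd : σ ∣ x := UniqueFactorizationMonoid.dvd_of_mem_factors hσ
    have h2 := hc σ hp hd
    have h3 := Wt_nonneg hf hf0 hhf hp.ne_zero
    omega
  have hnz : ∀ b ∈ UniqueFactorizationMonoid.factors x, b ≠ 0 :=
    fun b hb => (UniqueFactorizationMonoid.prime_of_factor b hb).ne_zero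
  have hprod0 : (UniqueFactorizationMonoid.factors x).prod ≠ 0 :=
    Multiset.prod_ne_zero (fun h0 => hnz 0 h0 rfl)
  have hWx : Wt O f hf x = 0 := by
    rw [← hu, Wt_mul hf hf0 hhf hprod0 u.ne_zero, Wt_isUnit hf hf0 hhf u.isUnit,
      Wt_prod hf hf0 hhf _ hnz, add_zero, Multiset.sum_eq_zero]
    intro z hz
    obtain ⟨σ, hσ, rfl⟩ := Multiset.mem_map.1 hz
    exact hall σ hσ
  omega

lemma exists_pow_sub_one_dvd {g : 𝓞 K} (hcop : IsCoprime g f) :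
    ∃ (t : ℕ) (c : 𝓞 K), 0 < t ∧ g ^ t = 1 + f * c := by
  classical
  set I : Ideal (𝓞 K) := Ideal.span ({f} : Set (𝓞 K))
  haveI : Fintype ((𝓞 K) ⧸ I) :=
    @Fintype.ofFinite _ (Ideal.finiteQuotientOfFreeOfNeBot I (by simpa [I, Ideal.span_singleton_eq_bot] using hf0))
  have hgunit : IsUnit (Ideal.Quotient.mk I g) := by
    obtain ⟨a, b, hab⟩ := hcop
    refine IsUnit.of_mul_eq_one (Ideal.Quotient.mk I a) ?_
    have hrw : g * a = 1 - b * f := by linear_combination hab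
    rw [← map_mul, hrw, map_sub, map_one,
      Ideal.Quotient.eq_zero_iff_mem.2 (I.mul_mem_left b (Ideal.mem_span_singleton_self f)),
      sub_zero]
  set t := orderOf hgunit.unit with htdef
  have ht : 0 < t := orderOf_pos _
  have hgt : Ideal.Quotient.mk I (g ^ t) = Ideal.Quotient.mk I 1 := by
    rw [map_pow, map_one, ← hgunit.unit_spec, ← Units.val_pow_eq_pow_val,
      pow_orderOf_eq_one, Units.val_one]
  have hdvd : f ∣ g ^ t - 1 := by
    rw [← Ideal.mem_span_singleton]
    exact Ideal.Quotient.eq.1 hgt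
  obtain ⟨c, hcc⟩ := hdvd
  exact ⟨t, c, ht, by linear_combination hcc⟩

lemma hfStrip (hPID : IsPrincipalIdealRing (𝓞 K)) {q : 𝓞 K} (hq : q ∈ O) (hq0 : q ≠ 0) :
    ∃ y : 𝓞 K, y ∈ O ∧ y ≠ 0 ∧ (∀ σ, Prime σ → σ ∣ y → σ ∣ f ∧ σ ∣ q) ∧
      (∀ σ, Prime σ → σ ∣ q → σ ∣ f → σ ∣ y) := by
  haveI := hPID
  classical
  obtain ⟨u, hu⟩ := UniqueFactorizationMonoid.factors_prod hq0
  set l := UniqueFactorizationMonoid.factors q with hldef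
  set bad := l.filter (fun σ => σ ∣ f) with hbaddef
  set good := l.filter (fun σ => ¬ σ ∣ f) with hgooddef
  have hsplit : bad + good = l := Multiset.filter_add_not _ l
  set g := good.prod with hgdef
  set B := bad.prod * (u : 𝓞 K) with hBdef
  have hqBg : q = B * g := by
    rw [hBdef, hgdef, ← hu, ← hsplit, Multiset.prod_add]
    ring
  have hB0 : B ≠ 0 := fun h => hq0 (by rw [hqBg, h, zero_mul])
  have hcop : IsCoprime g f := by
    apply isCoprime_of_prime_dvd
    · rintro ⟨-, rfl⟩
      exact hf0 rfl
    · intro z hz hzg hzf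
      obtain ⟨τ, hτm, hzτ⟩ := hz.exists_mem_multiset_dvd hzg
      have hτ : Prime τ := prime_of_factor τ (Multiset.mem_filter.1 hτm).1
      have hassoc := hz.associated_of_dvd hτ hzτ
      exact (Multiset.mem_filter.1 hτm).2 (hassoc.symm.dvd.trans hzf)
  obtain ⟨t, c, ht, htc⟩ := exists_pow_sub_one_dvd hf hf0 hhf hcop
  refine ⟨B ^ t, ?_, pow_ne_zero _ hB0, ?_, ?_⟩
  · have hBt : B ^ t = q ^ t - f * (c * B ^ t) := by
      have hqt : q ^ t = B ^ t * g ^ t := by rw [hqBg, mul_pow]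
      rw [hqt, htc]
      ring
    rw [hBt]
    exact O.sub_mem (O.pow_mem hq t) (hf _)
  · intro σ hσ hσy
    have hσB : σ ∣ B := hσ.dvd_of_dvd_pow hσy
    have hσbad : σ ∣ bad.prod := (Units.dvd_mul_right).1 hσB
    obtain ⟨τ, hτm, hστ⟩ := hσ.exists_mem_multiset_dvd hσbad
    have hτf : τ ∣ f := (Multiset.mem_filter.1 hτm).2
    refine ⟨hστ.trans hτf, ?_⟩
    exact (hσB.trans ⟨g, hqBg⟩)
  · intro σ hσ hσq hσf
    have hσBg : σ ∣ B * g := hqBg ▸ hσq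
    rcases (hσ.dvd_mul).1 hσBg with hB | hg
    · exact hB.trans (dvd_pow_self B ht.ne')
    · obtain ⟨τ, hτm, hστ⟩ := hσ.exists_mem_multiset_dvd hg
      have hτ : Prime τ := prime_of_factor τ (Multiset.mem_filter.1 hτm).1
      exact absurd ((hσ.associated_of_dvd hτ hστ).symm.dvd.trans hσf)
        (Multiset.mem_filter.1 hτm).2

lemma Wt_prime (hPID : IsPrincipalIdealRing (𝓞 K)) (hspec : SpecMapBijective O)
    {p : 𝓞 K} (hp : Prime p) : 1 ≤ Wt O f hf p := by
  haveI := hPID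
  classical
  by_cases hpf : p ∣ f
  · -- Case B : p divides the conductor element
    by_contra hW
    push_neg at hW
    have hWp : Wt O f hf p = 0 := le_antisymm (by omega) (Wt_nonneg hf hf0 hhf hp.ne_zero)
    haveI hspan : (Ideal.span ({p} : Set (𝓞 K))).IsPrime :=
      (Ideal.span_singleton_prime hp.ne_zero).2 hp
    set 𝔮 : Ideal O := Ideal.comap O.subtype (Ideal.span {p}) with h𝔮def
    have key : ∀ z : 𝓞 K, z ∈ O → z ≠ 0 → p ∣ z →
        ∃ τ, τ ∈ UniqueFactorizationMonoid.factors f ∧ 1 ≤ Wt O f hf τ ∧ τ ∣ z := by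
      intro z hz hz0 hpz
      obtain ⟨y, hyO, hy0, hy1, hy2⟩ := hfStrip hf hf0 hhf hPID hz hz0
      have hpy : p ∣ y := hy2 p hp hpz hpf
      have hynu : ¬ IsUnit (⟨y, hyO⟩ : O) := by
        intro h
        have : IsUnit y := by simpa using h.map O.subtype
        exact hp.not_unit (isUnit_of_dvd_unit hpy this)
      have hWy : 1 ≤ Wt O f hf y := by
        rw [Wt_mem hf hf0 hhf hyO hy0]
        exact_mod_cast hfLen_pos hhf (mkO_ne_zero hyO hy0) hynu
      obtain ⟨σ, hσp, hσy, hσW⟩ := Wt_exists_prime hf hf0 hhf hPID hy0 hWy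
      obtain ⟨hσf, hσz⟩ := hy1 σ hσp hσy
      obtain ⟨u, hu⟩ := UniqueFactorizationMonoid.factors_prod hf0
      have hσff : σ ∣ (UniqueFactorizationMonoid.factors f).prod :=
        (Units.dvd_mul_right).1 (hu ▸ hσf)
      obtain ⟨τ, hτm, hστ⟩ := hσp.exists_mem_multiset_dvd hσff
      have hτp : Prime τ := prime_of_factor τ hτm
      have hassoc : Associated σ τ := hσp.associated_of_dvd hτp hστ
      refine ⟨τ, hτm, ?_, hassoc.symm.dvd.trans hσz⟩
      rw [← Wt_assoc hf hf0 hhf hassoc hσp.ne_zero]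
      exact hσW
    have hfO : f ∈ O := by simpa using hf 1
    obtain ⟨τ0, hτ0m, hτ0W, -⟩ := key f hfO hf0 hpf
    set s : Finset (𝓞 K) :=
      (UniqueFactorizationMonoid.factors f).toFinset.filter (fun τ => 1 ≤ Wt O f hf τ)
      with hsdef
    have hτ0s : τ0 ∈ s := Finset.mem_filter.2 ⟨Multiset.mem_toFinset.2 hτ0m, hτ0W⟩
    have hcover : (𝔮 : Set O) ⊆
        ⋃ τ ∈ (s : Set (𝓞 K)), ↑(Ideal.comap O.subtype (Ideal.span {τ})) := by
      rintro z hz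
      by_cases hz0 : (z : 𝓞 K) = 0
      · refine Set.mem_biUnion hτ0s ?_
        show z ∈ Ideal.comap O.subtype (Ideal.span {τ0})
        rw [Ideal.mem_comap]
        simp only [Subring.coe_subtype, hz0]
        exact (Ideal.span {τ0}).zero_mem
      · have hpz : p ∣ (z : 𝓞 K) := by
          have := Ideal.mem_comap.1 hz
          rwa [Ideal.mem_span_singleton] at this
        obtain ⟨τ, hτm, hτW, hτz⟩ := key (z : 𝓞 K) z.2 hz0 hpz
        refine Set.mem_biUnion
          (Finset.mem_filter.2 ⟨Multiset.mem_toFinset.2 hτm, hτW⟩ : τ ∈ s) ?_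
        show z ∈ Ideal.comap O.subtype (Ideal.span {τ})
        rw [Ideal.mem_comap, Ideal.mem_span_singleton]
        exact hτz
    have hprimes : ∀ τ ∈ s, τ ≠ τ0 → τ ≠ τ0 →
        (Ideal.comap O.subtype (Ideal.span {τ})).IsPrime := by
      intro τ hτ _ _
      have hτp : Prime τ := prime_of_factor τ (Multiset.mem_toFinset.1 (Finset.mem_filter.1 hτ).1)
      haveI : (Ideal.span ({τ} : Set (𝓞 K))).IsPrime :=
        (Ideal.span_singleton_prime hτp.ne_zero).2 hτp
      exact Ideal.IsPrime.comap _
    obtain ⟨τ1, hτ1s, hle⟩ := (Ideal.subset_union_prime τ0 τ0 hprimes).1 hcover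
    have hτ1p : Prime τ1 :=
      prime_of_factor τ1 (Multiset.mem_toFinset.1 (Finset.mem_filter.1 hτ1s).1)
    have hτ1W : 1 ≤ Wt O f hf τ1 := (Finset.mem_filter.1 hτ1s).2
    haveI h𝔮p : 𝔮.IsPrime := Ideal.IsPrime.comap _
    haveI : Algebra.IsIntegral ℤ O := by
      constructor
      intro x
      obtain ⟨P, hPm, hPe⟩ := Algebra.IsIntegral.isIntegral (R := ℤ) (x : 𝓞 K)
      refine ⟨P, hPm, ?_⟩
      have hcomm : O.subtype (Polynomial.eval₂ (algebraMap ℤ O) x P) =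
          Polynomial.eval₂ (algebraMap ℤ (𝓞 K)) (x : 𝓞 K) P := by
        rw [Polynomial.hom_eval₂]
        have h12 : O.subtype.comp (algebraMap ℤ O) = algebraMap ℤ (𝓞 K) :=
          Subsingleton.elim _ _
        rw [h12]
        rfl
      apply Subtype.val_injective
      rw [show ((Polynomial.eval₂ (algebraMap ℤ O) x P : O) : 𝓞 K) =
        O.subtype (Polynomial.eval₂ (algebraMap ℤ O) x P) from rfl, hcomm, hPe]
      rfl
    have hmax : 𝔮.IsMaximal := by
      apply Ideal.isMaximal_of_isIntegral_of_isMaximal_comap (R := ℤ)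
      set J := 𝔮.comap (algebraMap ℤ O) with hJdef
      haveI : J.IsPrime := Ideal.IsPrime.comap _
      have hJb : J ≠ ⊥ := by
        set m := Ideal.absNorm (Ideal.span ({p} : Set (𝓞 K))) with hmdef
        have hm0 : m ≠ 0 := by
          rw [hmdef, ne_eq, Ideal.absNorm_eq_zero_iff, Ideal.span_singleton_eq_bot]
          exact hp.ne_zero
        have hmm : ((m : ℤ)) ∈ J := by
          rw [hJdef, Ideal.mem_comap, h𝔮def, Ideal.mem_comap]
          have : (algebraMap ℤ O) (m : ℤ) = ((m : ℤ) : O) := rfl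
          rw [this]
          have hcast : (O.subtype ((m : ℤ) : O)) = ((m : ℤ) : 𝓞 K) := by
            simp
          rw [hcast]
          exact_mod_cast Ideal.absNorm_mem (Ideal.span ({p} : Set (𝓞 K)))
        intro hbot
        rw [hbot, Ideal.mem_bot] at hmm
        exact hm0 (by exact_mod_cast hmm)
      exact Ideal.IsPrime.isMaximal ‹J.IsPrime› hJb
    have hne_top : (Ideal.comap O.subtype (Ideal.span {τ1})) ≠ ⊤ := by
      haveI : (Ideal.span ({τ1} : Set (𝓞 K))).IsPrime :=
        (Ideal.span_singleton_prime hτ1p.ne_zero).2 hτ1p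
      exact (Ideal.IsPrime.comap _).ne_top
    have heq : 𝔮 = Ideal.comap O.subtype (Ideal.span {τ1}) := hmax.eq_of_le hne_top hle
    have h1 : Ideal.span ({p} : Set (𝓞 K)) ∈ {P : Ideal (𝓞 K) | P.IsPrime ∧ P ≠ ⊥} :=
      ⟨hspan, by rw [ne_eq, Ideal.span_singleton_eq_bot]; exact hp.ne_zero⟩
    have h2 : Ideal.span ({τ1} : Set (𝓞 K)) ∈ {P : Ideal (𝓞 K) | P.IsPrime ∧ P ≠ ⊥} :=
      ⟨(Ideal.span_singleton_prime hτ1p.ne_zero).2 hτ1p,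
        by rw [ne_eq, Ideal.span_singleton_eq_bot]; exact hτ1p.ne_zero⟩
    have himg : (fun P : Ideal (𝓞 K) => P.comap O.subtype) (Ideal.span {p}) =
        (fun P : Ideal (𝓞 K) => P.comap O.subtype) (Ideal.span {τ1}) := by
      show Ideal.comap O.subtype (Ideal.span {p}) = Ideal.comap O.subtype (Ideal.span {τ1})
      rw [← h𝔮def, heq]
    have hspans := hspec.injOn h1 h2 himg
    have hassoc : Associated p τ1 := Ideal.span_singleton_eq_span_singleton.1 hspans
    have := Wt_assoc hf hf0 hhf hassoc hp.ne_zero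
    omega
  · -- Case A : p does not divide the conductor element
    have hcop : IsCoprime p f := (hp.coprime_iff_not_dvd).2 hpf
    obtain ⟨t, c, ht, htc⟩ := exists_pow_sub_one_dvd hf hf0 hhf hcop
    have hmem : p ^ t ∈ O := htc ▸ O.add_mem O.one_mem (hf c)
    have h0 : p ^ t ≠ 0 := pow_ne_zero _ hp.ne_zero
    have hnu : ¬ IsUnit ((⟨p ^ t, hmem⟩ : O)) := by
      intro h
      have hunit : IsUnit (p ^ t) := by simpa using h.map O.subtype
      exact hp.not_unit ((isUnit_pow_iff ht.ne').1 hunit)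
    have h1 : 1 ≤ hfLen (⟨p ^ t, hmem⟩ : O) := hfLen_pos hhf (mkO_ne_zero hmem h0) hnu
    have h2 : Wt O f hf (p ^ t) = hfLen (⟨p ^ t, hmem⟩ : O) := Wt_mem hf hf0 hhf hmem h0
    have h3 : Wt O f hf (p ^ t) = t * Wt O f hf p := Wt_pow hf hf0 hhf hp.ne_zero t
    have h4 : 0 ≤ Wt O f hf p := Wt_nonneg hf hf0 hhf hp.ne_zero
    rcases h4.lt_or_eq with h | h
    · omega
    · exfalso
      rw [← h, mul_zero] at h3
      omega

lemma Wt_zero_isUnit (hPID : IsPrincipalIdealRing (𝓞 K)) (hspec : SpecMapBijective O)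
    {x : 𝓞 K} (hx : x ≠ 0) (h0 : Wt O f hf x = 0) : IsUnit x := by
  haveI := hPID
  by_contra hu
  obtain ⟨d, hdirr, hdvd⟩ := WfDvdMonoid.exists_irreducible_factor hu hx
  have hdp : Prime d := UniqueFactorizationMonoid.irreducible_iff_prime.1 hdirr
  obtain ⟨z, rfl⟩ := hdvd
  have hz0 : z ≠ 0 := fun h => hx (by rw [h, mul_zero])
  have := Wt_mul hf hf0 hhf hdp.ne_zero hz0
  have hWd := Wt_prime hf hf0 hhf hPID hspec hdp
  have hWz := Wt_nonneg hf hf0 hhf hz0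
  omega

lemma exists_unit_mul_mem (hPID : IsPrincipalIdealRing (𝓞 K)) (hspec : SpecMapBijective O)
    {p : 𝓞 K} (hp : Prime p) : ∃ u : (𝓞 K)ˣ, (↑u : 𝓞 K) * p ∈ O := by
  haveI := hPID
  have hA0 : f * p ≠ 0 := mul_ne_zero hf0 hp.ne_zero
  have hAnu : ¬ IsUnit ((⟨f * p, hf p⟩ : O)) := by
    intro h
    have : IsUnit (f * p) := by simpa using h.map O.subtype
    exact hp.not_unit (isUnit_of_dvd_unit (dvd_mul_left p f) this)
  obtain ⟨l, hl, hlp⟩ := hhf.1 _ (mkO_ne_zero (hf p) hA0) hAnu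
  have hpdvd : p ∣ (l.map (fun b : O => (b : 𝓞 K))).prod := by
    have h1 : (l.map (fun b : O => (b : 𝓞 K))).prod = ((l.prod : O) : 𝓞 K) := by
      simpa [Subring.coe_subtype] using (map_multiset_prod O.subtype l).symm
    rw [h1, hlp]
    exact dvd_mul_left p f
  obtain ⟨b, hbm, hpb⟩ := hp.exists_mem_multiset_dvd hpdvd
  obtain ⟨α, hαl, rfl⟩ := Multiset.mem_map.1 hbm
  have hα0 : (α : 𝓞 K) ≠ 0 := by
    intro h
    have hα0' : α = 0 := Subtype.ext h
    apply mkO_ne_zero (hf p) hA0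
    rw [← hlp]
    exact Multiset.prod_eq_zero (hα0' ▸ hαl)
  have hlen : hfLen α = 1 := by
    have := hfLen_eq hhf (a := α) (l := {α}) (by simpa using hα0)
      (by intro b hb; rw [Multiset.mem_singleton.1 hb]; exact hl α hαl)
      (by simp)
    simpa using this.symm
  have hWα : Wt O f hf (α : 𝓞 K) = 1 := by
    rw [Wt_mem hf hf0 hhf α.2 hα0]
    simp [hlen]
  obtain ⟨β, hβ⟩ := hpb
  have hβ0 : β ≠ 0 := by
    intro h
    exact hα0 (by rw [hβ, h, mul_zero])
  have hWβ : Wt O f hf β = 0 := by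
    have hsplit : Wt O f hf (α : 𝓞 K) = Wt O f hf p + Wt O f hf β := by
      rw [hβ]
      exact Wt_mul hf hf0 hhf hp.ne_zero hβ0
    have hWp := Wt_prime hf hf0 hhf hPID hspec hp
    have hWβn := Wt_nonneg hf hf0 hhf hβ0
    omega
  have hβu : IsUnit β := Wt_zero_isUnit hf hf0 hhf hPID hspec hβ0 hWβ
  obtain ⟨u, rfl⟩ := hβu
  refine ⟨u, ?_⟩
  have : (↑u : 𝓞 K) * p = (α : 𝓞 K) := by rw [hβ]; ring
  rw [this]
  exact α.2

end WAux

lemma exists_conductor_elt {K : Type*} [Field K] [NumberField K]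
    (O : Subring (𝓞 K)) (hO : O.IsOrder) :
    ∃ f : 𝓞 K, f ≠ 0 ∧ ∀ y, f * y ∈ O := by
  classical
  obtain ⟨s, hs⟩ := (Module.Finite.fg_top (R := ℤ) (M := 𝓞 K))
  choose n hn0 hnm using hO
  refine ⟨((∏ x ∈ s, n x : ℤ) : 𝓞 K), ?_, ?_⟩
  · exact_mod_cast Finset.prod_ne_zero_iff.2 (fun x _ => hn0 x)
  · intro y
    have hy : y ∈ Submodule.span ℤ (s : Set (𝓞 K)) := by
      rw [hs]; exact Submodule.mem_top
    induction hy using Submodule.span_induction with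
    | mem z hzs =>
      have h1 : ((∏ x ∈ s, n x : ℤ) : 𝓞 K) * z =
          ((∏ x ∈ s.erase z, n x : ℤ) : 𝓞 K) * ((n z : 𝓞 K) * z) := by
        rw [← Finset.mul_prod_erase s n hzs]
        push_cast
        ring
      rw [h1]
      exact O.mul_mem (intCast_mem O _) (hnm z)
    | zero => rw [mul_zero]; exact O.zero_mem
    | add a b ha hb iha ihb => rw [mul_add]; exact O.add_mem iha ihb
    | smul c a ha iha =>
      rw [show ((∏ x ∈ s, n x : ℤ) : 𝓞 K) * (c • a) =
        (c : 𝓞 K) * (((∏ x ∈ s, n x : ℤ) : 𝓞 K) * a) by rw [zsmul_eq_mul]; ring]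
      exact O.mul_mem (intCast_mem O _) iha

/-- If `𝒪_K` is a principal ideal domain, `𝒪` is half-factorial and the spec-map is
bijective, then `𝒪 · 𝒪_K^× = 𝒪_K`. -/
theorem units_mul_order_eq_ringOfIntegers (O : Subring (𝓞 K)) (hO : O.IsOrder)
    (hPID : IsPrincipalIdealRing (𝓞 K))
    (hhf : IsHalfFactorialRing O) (hspec : SpecMapBijective O) :
    ∀ x : 𝓞 K, ∃ (ε : (𝓞 K)ˣ) (a : 𝓞 K), a ∈ O ∧ x = ε * a := by
  obtain ⟨f, hf0, hf⟩ := exists_conductor_elt O hO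
  by_cases hfu : IsUnit f
  · intro x
    refine ⟨1, x, ?_, by simp⟩
    obtain ⟨u, rfl⟩ := hfu
    have := hf ((↑u⁻¹ : 𝓞 K) * x)
    rwa [← mul_assoc, Units.mul_inv, one_mul] at this
  · haveI := hPID
    intro x
    induction x using UniqueFactorizationMonoid.induction_on_prime with
    | h₁ => exact ⟨1, 0, O.zero_mem, by simp⟩
    | h₂ x hx => exact ⟨hx.unit, 1, O.one_mem, by simp [hx.unit_spec]⟩
    | h₃ a q ha hq ih =>
      obtain ⟨ε, b, hb, rfl⟩ := ih
      obtain ⟨u, hu⟩ := exists_unit_mul_mem hf hf0 hhf hPID hspec hq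
      refine ⟨ε * u⁻¹, (↑u * q) * b, O.mul_mem hu hb, ?_⟩
      rw [Units.val_mul]
      have h1 : ((↑u⁻¹ : 𝓞 K)) * ↑u = 1 := u.inv_mul
      calc q * (↑ε * b) = ↑ε * ((↑u⁻¹ * ↑u) * q * b) := by rw [h1]; ring
        _ = ↑ε * ↑u⁻¹ * (↑u * q * b) := by ring
end

section
/- Suppose 𝒪 is half-factorial and the spec-map is bijective. Let 𝔓 be a nonzero prime ideal of 𝒪_K containing the conductor 𝔣, and suppose 𝔓 = π·𝒪_K for some element π ∈ 𝒪. Then no element of 𝔓² ∩ 𝒪 is an irreducible element of 𝒪. -/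
open NumberField

set_option synthInstance.maxHeartbeats 1000000
set_option maxHeartbeats 1000000

variable {K : Type*} [Field K] [NumberField K]

lemma exists_conductor_ne_zero (O : Subring (𝓞 K)) (hO : O.IsOrder) :
    ∃ c : 𝓞 K, c ≠ 0 ∧ c ∈ conductorIdeal O := by
  obtain ⟨m, s, hs⟩ := Module.Finite.exists_fin (R := ℤ) (M := 𝓞 K)
  choose n hn hns using fun i => hO (s i)
  refine ⟨((∏ i, n i : ℤ) : 𝓞 K), ?_, ?_⟩
  · have : (∏ i, n i : ℤ) ≠ 0 := Finset.prod_ne_zero_iff.mpr fun i _ => hn i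
    exact_mod_cast this
  · intro y
    have hy : y ∈ Submodule.span ℤ (Set.range s) := hs ▸ Submodule.mem_top
    induction hy using Submodule.span_induction with
    | mem z hz =>
      obtain ⟨i, rfl⟩ := hz
      have h1 : (∏ j, n j) = n i * ∏ j ∈ Finset.univ.erase i, n j := by
        rw [Finset.mul_prod_erase Finset.univ n (Finset.mem_univ i)]
      have : ((∏ i, n i : ℤ) : 𝓞 K) * s i
          = ((∏ j ∈ Finset.univ.erase i, n j : ℤ) : 𝓞 K) * ((n i : 𝓞 K) * s i) := by
        rw [h1]; push_cast; ring
      rw [this]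
      exact O.mul_mem (by exact_mod_cast intCast_mem O _) (hns i)
    | zero => simpa using O.zero_mem
    | add z w _ _ hz hw => simpa [mul_add] using O.add_mem hz hw
    | smul r z _ hz =>
      have : ((∏ i, n i : ℤ) : 𝓞 K) * (r • z) = r • (((∏ i, n i : ℤ) : 𝓞 K) * z) := by
        simp [smul_eq_mul]; ring
      rw [this]
      exact O.zsmul_mem hz r

lemma exists_factor_mul_unit {R : Type*} [CommRing R]
    (hex : ∀ a : R, a ≠ 0 → ¬ IsUnit a →
      ∃ l : Multiset R, (∀ b ∈ l, Irreducible b) ∧ l.prod = a)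
    (a : R) (ha : a ≠ 0) :
    ∃ (l : Multiset R) (u : Rˣ), (∀ b ∈ l, Irreducible b) ∧ l.prod * u = a := by
  by_cases h : IsUnit a
  · exact ⟨0, h.unit, by simp, by simp⟩
  · obtain ⟨l, hl, hp⟩ := hex a ha h
    exact ⟨l, 1, hl, by simp [hp]⟩

lemma absorb_unit {R : Type*} [CommRing R]
    (z : R) (hz : ¬ IsUnit z) (M : Multiset R) (hM : ∀ b ∈ M, Irreducible b)
    (u : Rˣ) (h : M.prod * u = z) :
    ∃ M' : Multiset R, (∀ b ∈ M', Irreducible b) ∧ M'.prod = z ∧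
      Multiset.card M' = Multiset.card M := by
  classical
  rcases Multiset.empty_or_exists_mem M with rfl | ⟨b, hb⟩
  · simp only [Multiset.prod_zero, one_mul] at h
    exact absurd (h ▸ u.isUnit) hz
  · refine ⟨(↑u * b) ::ₘ M.erase b, ?_, ?_, ?_⟩
    · intro b' hb'
      rcases Multiset.mem_cons.mp hb' with rfl | hb'
      · exact (irreducible_units_mul u).mpr (hM b hb)
      · exact hM b' (Multiset.mem_of_mem_erase hb')
    · have hM' : b ::ₘ M.erase b = M := Multiset.cons_erase hb
      calc ((↑u * b) ::ₘ M.erase b).prod = ↑u * (b ::ₘ M.erase b).prod := by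
            simp [Multiset.prod_cons]; ring
        _ = ↑u * M.prod := by rw [hM']
        _ = z := by rw [← h]; ring
    · have hM' : b ::ₘ M.erase b = M := Multiset.cons_erase hb
      calc Multiset.card ((↑u * b) ::ₘ M.erase b) = Multiset.card (M.erase b) + 1 := by
            simp
        _ = Multiset.card (b ::ₘ M.erase b) := by simp
        _ = Multiset.card M := by rw [hM']

/-- If `𝒪` is half-factorial, the spec-map is bijective, and `𝔓 = π𝒪_K ⊇ 𝔣` is a
principal prime of `𝒪_K` with `π ∈ 𝒪`, then no element of `𝔓² ∩ 𝒪` is irreducible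
in `𝒪`. -/
theorem not_irreducible_of_mem_sq (O : Subring (𝓞 K)) (hO : O.IsOrder)
    (hhf : IsHalfFactorialRing O) (hspec : SpecMapBijective O)
    (P : Ideal (𝓞 K)) (hP : P.IsPrime) (hPbot : P ≠ ⊥) (hPf : conductorIdeal O ≤ P)
    (π : 𝓞 K) (hπO : π ∈ O) (hπ : P = Ideal.span {π}) :
    ∀ (x : 𝓞 K) (hx : x ∈ O), x ∈ P ^ 2 → ¬ Irreducible (⟨x, hx⟩ : O) := by
  intro x hx hx2 hirr
  obtain ⟨c, hc0, hcf⟩ := exists_conductor_ne_zero O hO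
  have hcO : ∀ y : 𝓞 K, c * y ∈ O := hcf
  -- x = π ^ 2 * y
  have hdvd : π ^ 2 ∣ x := by
    rw [hπ, Ideal.span_singleton_pow, Ideal.mem_span_singleton] at hx2
    exact hx2
  obtain ⟨y, hy⟩ := hdvd
  -- basic nonvanishing facts
  have hπ0 : π ≠ 0 := by
    intro h
    exact hPbot (by rw [hπ, h, Ideal.span_singleton_eq_bot])
  have hπnu : ¬ IsUnit π := fun h => hP.ne_top (hπ ▸ Ideal.span_singleton_eq_top.mpr h)
  set a : O := (⟨x, hx⟩ : O) with ha
  have hane : a ≠ 0 := hirr.ne_zero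
  have hxne : x ≠ 0 := by
    intro h
    exact hane (Subtype.ext h)
  have hyne : y ≠ 0 := by
    intro h
    exact hxne (by rw [hy, h, mul_zero])
  set p : O := (⟨π, hπO⟩ : O) with hp
  have hpne : p ≠ 0 := fun h => hπ0 (congrArg Subtype.val h)
  have hpnu : ¬ IsUnit p := fun h => hπnu (h.map O.subtype)
  set cO : O := (⟨c, by simpa using hcO 1⟩ : O) with hcOdef
  have hcOne : cO ≠ 0 := fun h => hc0 (congrArg Subtype.val h)
  -- factor p
  obtain ⟨lπ, hlπ, hlπp⟩ := hhf.1 p hpne hpnu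
  have ht : 1 ≤ Multiset.card lπ := by
    rcases Nat.eq_zero_or_pos (Multiset.card lπ) with h | h
    · exfalso
      rw [Multiset.card_eq_zero] at h
      exact hpnu (by rw [← hlπp, h]; simp)
    · exact h
  -- factor cO up to a unit
  obtain ⟨lc, u, hlc, hlcc⟩ := exists_factor_mul_unit hhf.1 cO hcOne
  set n : ℕ := Multiset.card lc + 1 with hn
  set z : O := a ^ n * cO with hz
  have hzne : z ≠ 0 := mul_ne_zero (pow_ne_zero _ hane) hcOne
  have hznu : ¬ IsUnit z := by
    intro h
    apply hirr.not_isUnit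
    have : z = a * (a ^ Multiset.card lc * cO) := by
      rw [hz, hn, pow_succ]; ring
    rw [this] at h
    exact isUnit_of_mul_isUnit_left h
  -- first factorization of z : length 2 * card lc + 1
  have hM1 : (Multiset.replicate n a + lc).prod * u = z := by
    rw [Multiset.prod_add, Multiset.prod_replicate, hz, mul_assoc, hlcc]
  obtain ⟨l₁, hl₁, hl₁z, hl₁c⟩ := absorb_unit z hznu _
    (by
      intro b hb
      rcases Multiset.mem_add.mp hb with hb | hb
      · rw [Multiset.eq_of_mem_replicate hb]; exact hirr
      · exact hlc b hb) u hM1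
  -- second factorization of z : length ≥ 2 * n
  set w : O := (⟨c * y ^ n, hcO _⟩ : O) with hw
  have hwne : w ≠ 0 := by
    intro h
    exact mul_ne_zero hc0 (pow_ne_zero _ hyne) (congrArg Subtype.val h)
  obtain ⟨lw, u2, hlw, hlww⟩ := exists_factor_mul_unit hhf.1 w hwne
  have hkey : z = p ^ (2 * n) * w := by
    apply Subtype.ext
    show x ^ n * c = π ^ (2 * n) * (c * y ^ n)
    rw [hy]; ring
  have hM2 : ((2 * n) • lπ + lw).prod * u2 = z := by
    rw [Multiset.prod_add, Multiset.prod_nsmul, hlπp, hkey, mul_assoc, hlww]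
  obtain ⟨l₂, hl₂, hl₂z, hl₂c⟩ := absorb_unit z hznu _
    (by
      intro b hb
      rcases Multiset.mem_add.mp hb with hb | hb
      · exact hlπ b (Multiset.mem_of_mem_nsmul hb)
      · exact hlw b hb) u2 hM2
  -- compare lengths
  have hcard := hhf.2 z hzne hznu l₁ l₂ hl₁ hl₂ hl₁z hl₂z
  rw [hl₁c, hl₂c] at hcard
  simp only [Multiset.card_add, Multiset.card_replicate, Multiset.card_nsmul] at hcard
  have h2n : 2 * n ≤ 2 * n * Multiset.card lπ := Nat.le_mul_of_pos_right _ ht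
  omega
end

section
/- Suppose 𝒪 is half-factorial and the spec-map is bijective. Let 𝔓 be a nonzero non-principal prime ideal of 𝒪_K containing the conductor 𝔣, and suppose there exists a ∈ 𝒪 with a·𝒪_K = 𝔓². Then no element of 𝔓³ ∩ 𝒪 is an irreducible element of 𝒪. -/
open NumberField

set_option synthInstance.maxHeartbeats 1000000
set_option maxHeartbeats 1000000

variable {K : Type*} [Field K] [NumberField K]

lemma exists_conductor_elem_ne_zero (O : Subring (𝓞 K)) (hO : O.IsOrder) :
    ∃ c : 𝓞 K, c ≠ 0 ∧ ∀ y : 𝓞 K, c * y ∈ O := by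
  classical
  let b := Module.Free.chooseBasis ℤ (𝓞 K)
  choose n hn0 hn using fun i => hO (b i)
  refine ⟨((∏ i, n i : ℤ) : 𝓞 K), ?_, ?_⟩
  · exact_mod_cast Int.cast_ne_zero.mpr (Finset.prod_ne_zero_iff.mpr fun i _ => hn0 i)
  · intro y
    have hy : y ∈ Submodule.span ℤ (Set.range ⇑b) := by
      rw [b.span_eq]; trivial
    induction hy using Submodule.span_induction with
    | mem z hz =>
        obtain ⟨i, rfl⟩ := hz
        have hsplit : (∏ j, n j) = n i * ∏ j ∈ Finset.univ.erase i, n j :=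
          (Finset.mul_prod_erase Finset.univ n (Finset.mem_univ i)).symm
        rw [hsplit]
        have h1 : ((n i : ℤ) : 𝓞 K) * b i * ((∏ j ∈ Finset.univ.erase i, n j : ℤ) : 𝓞 K) ∈ O :=
          O.mul_mem (hn i) (intCast_mem O _)
        convert h1 using 1
        push_cast
        ring
    | zero => simpa using O.zero_mem
    | add z w _ _ hz hw => simpa [mul_add] using O.add_mem hz hw
    | smul m z _ hz =>
        rw [zsmul_eq_mul, mul_left_comm]
        exact O.mul_mem (intCast_mem O m) hz

/-- If `𝒪` is half-factorial, the spec-map is bijective, `𝔓 ⊇ 𝔣` is a nonzero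
non-principal prime of `𝒪_K` and some `a ∈ 𝒪` satisfies `a𝒪_K = 𝔓²`, then no element of
`𝔓³ ∩ 𝒪` is irreducible in `𝒪`. -/
theorem not_irreducible_of_mem_cube (O : Subring (𝓞 K)) (hO : O.IsOrder)
    (hhf : IsHalfFactorialRing O) (hspec : SpecMapBijective O)
    (P : Ideal (𝓞 K)) (hP : P.IsPrime) (hPbot : P ≠ ⊥) (hPf : conductorIdeal O ≤ P)
    (hPnp : ¬ P.IsPrincipal)
    (a : 𝓞 K) (haO : a ∈ O) (ha : Ideal.span {a} = P ^ 2) :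
    ∀ (x : 𝓞 K) (hx : x ∈ O), x ∈ P ^ 3 → ¬ Irreducible (⟨x, hx⟩ : O) := by
  intro x hx hx3 hirr
  set X : O := (⟨x, hx⟩ : O) with hX
  -- nonzero facts
  have hX0 : X ≠ 0 := hirr.ne_zero
  have hx0 : x ≠ 0 := fun h => hX0 (Subtype.ext h)
  have ha0 : a ≠ 0 := by
    rintro rfl
    obtain ⟨y, hyP, hy0⟩ := Submodule.exists_mem_ne_zero_of_ne_bot hPbot
    have : y ^ 2 ∈ P ^ 2 := Ideal.pow_mem_pow hyP 2
    rw [← ha, Ideal.span_singleton_eq_bot.mpr rfl] at this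
    exact hy0 (by simpa [pow_eq_zero_iff] using (Submodule.mem_bot _).mp this)
  have haP : a ∈ P :=
    Ideal.pow_le_self two_ne_zero (ha ▸ Ideal.mem_span_singleton_self a)
  -- nonunit helper
  have hnu : ∀ e : O, (e : 𝓞 K) ∈ P → ¬ IsUnit e := by
    intro e he hu
    obtain ⟨d, hd⟩ := hu.exists_right_inv
    apply hP.ne_top
    rw [Ideal.eq_top_iff_one]
    have h1 : ((e * d : O) : 𝓞 K) ∈ P := by
      push_cast
      exact P.mul_mem_right _ he
    rw [hd] at h1
    simpa using h1
  -- conductor element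
  obtain ⟨c, hc0, hcmul⟩ := exists_conductor_elem_ne_zero O hO
  have hcf : c ∈ conductorIdeal O := hcmul
  have hcP : c ∈ P := hPf hcf
  set C : O := (⟨c, by simpa using hcmul 1⟩ : O) with hC
  have hC0 : C ≠ 0 := fun h => hc0 (congrArg Subtype.val h)
  obtain ⟨lC, hlCirr, hlCprod⟩ := hhf.1 C hC0 (hnu C hcP)
  set L := Multiset.card lC with hLdef
  set j := L + 1 with hj
  set k := 2 * j with hk
  -- x = a * t with t ∈ P
  have hxmem : x ∈ Ideal.span {a} * P := by
    rw [ha, ← pow_succ]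
    exact hx3
  obtain ⟨t, htP, hxt⟩ := Ideal.mem_span_singleton_mul.mp hxmem
  have ht0 : t ≠ 0 := by
    rintro rfl
    rw [mul_zero] at hxt
    exact hx0 hxt.symm
  -- t ^ k = a ^ j * s
  have htk : t ^ k ∈ Ideal.span {a ^ j} := by
    rw [← Ideal.span_singleton_pow, ha, ← pow_mul]
    exact Ideal.pow_mem_pow htP k
  obtain ⟨s, hs⟩ := Ideal.mem_span_singleton.mp htk
  have hs0 : s ≠ 0 := by
    rintro rfl
    rw [mul_zero] at hs
    exact pow_ne_zero k ht0 hs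
  -- elements of O
  set A : O := (⟨a, haO⟩ : O) with hA
  have hA0 : A ≠ 0 := fun h => ha0 (congrArg Subtype.val h)
  obtain ⟨lA, hlAirr, hlAprod⟩ := hhf.1 A hA0 (hnu A haP)
  set CS : O := (⟨c * s, hcmul s⟩ : O) with hCS
  have hCS0 : CS ≠ 0 := fun h => (mul_ne_zero hc0 hs0) (congrArg Subtype.val h)
  have hCSP : (CS : 𝓞 K) ∈ P := P.mul_mem_right s hcP
  obtain ⟨lCS, hlCSirr, hlCSprod⟩ := hhf.1 CS hCS0 (hnu CS hCSP)
  -- key equation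
  have key : c * x ^ k = a ^ (k + j) * (c * s) := by
    rw [← hxt, mul_pow, hs]
    ring
  have hEq : C * X ^ k = A ^ (k + j) * CS := by
    apply Subtype.ext
    push_cast
    exact key
  set E : O := C * X ^ k with hE
  have hE0 : E ≠ 0 := mul_ne_zero hC0 (pow_ne_zero k hX0)
  have hEP : (E : 𝓞 K) ∈ P := by
    have hc1 : (E : 𝓞 K) = c * x ^ k := by
      rw [hE]
      rw [MulMemClass.coe_mul, SubmonoidClass.coe_pow]
    rw [hc1]
    exact P.mul_mem_right _ hcP
  have hEnu : ¬ IsUnit E := hnu E hEP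
  -- two factorizations
  set l₁ : Multiset O := lC + Multiset.replicate k X with hl₁
  set l₂ : Multiset O := (k + j) • lA + lCS with hl₂
  have h₁irr : ∀ b ∈ l₁, Irreducible b := by
    intro b hb
    rcases Multiset.mem_add.mp hb with h | h
    · exact hlCirr b h
    · rw [Multiset.eq_of_mem_replicate h]; exact hirr
  have h₂irr : ∀ b ∈ l₂, Irreducible b := by
    intro b hb
    rcases Multiset.mem_add.mp hb with h | h
    · exact hlAirr b (Multiset.mem_nsmul.mp h).2
    · exact hlCSirr b h
  have h₁prod : l₁.prod = E := by
    rw [hl₁, Multiset.prod_add, Multiset.prod_replicate, hlCprod]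
  have h₂prod : l₂.prod = E := by
    rw [hl₂, Multiset.prod_add, Multiset.prod_nsmul, hlAprod, hlCSprod]
    exact hEq.symm
  have hcard := hhf.2 E hE0 hEnu l₁ l₂ h₁irr h₂irr h₁prod h₂prod
  have hlA1 : 1 ≤ Multiset.card lA := by
    rcases Nat.eq_zero_or_pos (Multiset.card lA) with h | h
    · exfalso
      rw [Multiset.card_eq_zero] at h
      rw [h, Multiset.prod_zero] at hlAprod
      exact hnu A haP (hlAprod ▸ isUnit_one)
    · exact h
  have hlCS1 : 1 ≤ Multiset.card lCS := by
    rcases Nat.eq_zero_or_pos (Multiset.card lCS) with h | h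
    · exfalso
      rw [Multiset.card_eq_zero] at h
      rw [h, Multiset.prod_zero] at hlCSprod
      exact hnu CS hCSP (hlCSprod ▸ isUnit_one)
    · exact h
  rw [hl₁, hl₂] at hcard
  simp only [Multiset.card_add, Multiset.card_replicate, Multiset.card_nsmul] at hcard
  have hge : k + j ≤ (k + j) * Multiset.card lA := Nat.le_mul_of_pos_right _ hlA1
  omega
end

section
/- 𝒪 is seminormal if and only if the conductor 𝔣 is a squarefree ideal of 𝒪_K, i.e. no square of a nonzero prime ideal of 𝒪_K divides 𝔣. -/
open NumberField

set_option synthInstance.maxHeartbeats 1000000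
set_option maxHeartbeats 1000000

variable {K : Type*} [Field K] [NumberField K]

/-- In a finite reduced commutative ring, every element satisfies `x ^ (m+1) = x`
for some `m ≥ 1`. -/
lemma exists_pow_succ_eq_self {R : Type*} [CommRing R] [Finite R] [IsReduced R] (x : R) :
    ∃ m : ℕ, 1 ≤ m ∧ x ^ (m + 1) = x := by
  obtain ⟨a, b, hab, h⟩ := Finite.exists_ne_map_eq_of_infinite fun k : ℕ => x ^ (k + 1)
  wlog hlt : a < b generalizing a b
  · exact this b a hab.symm h.symm (by omega)
  set s := a + 1 with hs
  set d := b - a with hd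
  have hd1 : 1 ≤ d := by omega
  have hsd : x ^ (s + d) = x ^ s := by
    have : s + d = b + 1 := by omega
    rw [this]; exact h.symm
  have h1 : ∀ t, s ≤ t → x ^ (t + d) = x ^ t := by
    intro t ht
    obtain ⟨j, rfl⟩ := Nat.exists_eq_add_of_le ht
    rw [show s + j + d = s + d + j by ring, pow_add, hsd, ← pow_add]
  have h2 : ∀ (k : ℕ) (t), s ≤ t → x ^ (t + k * d) = x ^ t := by
    intro k
    induction k with
    | zero => intro t ht; simp
    | succ k ih =>
      intro t ht
      rw [show t + (k + 1) * d = t + k * d + d by ring,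
        h1 _ (le_trans ht (Nat.le_add_right _ _)), ih t ht]
  set e := x ^ (s * d) with he
  have hsd' : s ≤ s * d := Nat.le_mul_of_pos_right s (by omega)
  have hee : e * e = e := by
    rw [he, ← pow_add, show s * d + s * d = s * d + s * d from rfl]
    exact h2 s (s * d) hsd'
  have h1e : (1 - e) * (1 - e) = 1 - e := by linear_combination hee
  have hpow : ∀ n, 1 ≤ n → (1 - e) ^ n = 1 - e := by
    intro n hn
    induction n with
    | zero => omega
    | succ n ih =>
      rcases Nat.eq_zero_or_pos n with rfl | hn'
      · simp
      · rw [pow_succ, ih hn', h1e]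
  have hsd1 : 1 ≤ s * d := by
    have : 1 * 1 ≤ s * d := Nat.mul_le_mul (by omega) hd1
    omega
  have hz : (x * (1 - e)) ^ (s * d) = 0 := by
    rw [mul_pow, hpow _ hsd1, ← he, mul_sub, mul_one, hee, sub_self]
  have hx0 : x * (1 - e) = 0 := IsReduced.eq_zero _ ⟨s * d, hz⟩
  refine ⟨s * d, hsd1, ?_⟩
  have hxe : x = x * e := by linear_combination hx0
  rw [pow_succ']
  rw [← he]
  exact hxe.symm

theorem pow_eq_self_of_pow_succ {R : Type*} [CommRing R] {x : R} {m : ℕ}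
    (h : x ^ (m + 1) = x) : ∀ k : ℕ, x ^ (k * m + 1) = x := by
  intro k
  induction k with
  | zero => simp
  | succ k ih =>
    rw [show (k + 1) * m + 1 = (k * m + 1) + m by ring, pow_add, ih, ← pow_succ', h]

/-- **Proposition 4.5.** `𝒪` is seminormal if and only if its conductor is a squarefree
ideal of `𝒪_K`. -/
theorem seminormal_iff_conductor_squarefree (O : Subring (𝓞 K)) (hO : O.IsOrder) :
    (¬ ∃ x : 𝓞 K, x ∉ O ∧ ∃ N : ℕ, ∀ n ≥ N, x ^ n ∈ O) ↔
      ∀ P : Ideal (𝓞 K), P.IsPrime → P ≠ ⊥ → ¬ P ^ 2 ∣ conductorIdeal O := by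
  have hfbot : conductorIdeal O ≠ ⊥ := conductorIdeal_ne_bot O hO
  have hfO : ∀ x ∈ conductorIdeal O, x ∈ O := fun x hx => by simpa using hx 1
  constructor
  · -- seminormal → squarefree
    intro hsem P hP hPbot hdvd
    have hsem' : ∀ z : 𝓞 K, (∃ N : ℕ, ∀ n ≥ N, z ^ n ∈ O) → z ∈ O := by
      intro z hz
      by_contra hzO
      exact hsem ⟨z, hzO, hz⟩
    -- the conductor is a radical ideal
    have hrad : ∀ (x : 𝓞 K) (n : ℕ), x ^ n ∈ conductorIdeal O → x ∈ conductorIdeal O := by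
      intro x n hxn
      rcases Nat.eq_zero_or_pos n with rfl | hn
      · have : conductorIdeal O = ⊤ := by
          rw [Ideal.eq_top_iff_one]; simpa using hxn
        rw [this]; trivial
      · intro y
        refine hsem' (x * y) ⟨n, fun m hm => ?_⟩
        have hxy : (x * y) ^ m = x ^ n * (x ^ (m - n) * y ^ m) := by
          rw [mul_pow, ← mul_assoc, ← pow_add]
          congr 2
          omega
        rw [hxy]
        exact hxn _
    have hradI : IsRadical (conductorIdeal O) := by
      intro n J hJ
      rw [Ideal.dvd_iff_le] at hJ ⊢
      intro x hx
      exact hrad x n (hJ (Ideal.pow_mem_pow hx n))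
    have hsq : Squarefree (conductorIdeal O) := hradI.squarefree hfbot
    have hPprime : Prime P := (Ideal.prime_iff_isPrime hPbot).mpr hP
    have : IsUnit P := hsq P (by rwa [← sq])
    exact hP.ne_top (Ideal.isUnit_iff.mp this)
  · -- squarefree → seminormal
    intro hsf
    have hsq : Squarefree (conductorIdeal O) := by
      intro J hJ
      by_contra hJu
      have hJ0 : J ≠ 0 := by
        rintro rfl
        rw [mul_zero, zero_dvd_iff] at hJ
        exact hfbot hJ
      obtain ⟨P, hPirr, hPdvd⟩ := WfDvdMonoid.exists_irreducible_factor hJu hJ0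
      have hPprime : Prime P := UniqueFactorizationMonoid.irreducible_iff_prime.mp hPirr
      refine hsf P (Ideal.isPrime_of_prime hPprime) hPprime.ne_zero ?_
      rw [sq]
      exact dvd_trans (mul_dvd_mul hPdvd hPdvd) hJ
    have hradI : IsRadical (conductorIdeal O) := hsq.isRadical
    have hrad : ∀ (x : 𝓞 K) (n : ℕ), x ^ n ∈ conductorIdeal O → x ∈ conductorIdeal O := by
      intro x n hxn
      have h1 : conductorIdeal O ∣ Ideal.span {x} ^ n := by
        rw [Ideal.span_singleton_pow, Ideal.dvd_iff_le, Ideal.span_le, Set.singleton_subset_iff]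
        exact hxn
      have h2 := hradI n (Ideal.span {x}) h1
      rw [Ideal.dvd_iff_le] at h2
      exact h2 (Ideal.mem_span_singleton_self x)
    letI : Fintype (𝓞 K ⧸ conductorIdeal O) :=
      @Fintype.ofFinite _ (Ideal.finiteQuotientOfFreeOfNeBot _ hfbot)
    haveI : IsReduced (𝓞 K ⧸ conductorIdeal O) := by
      constructor
      intro y ⟨n, hn⟩
      obtain ⟨x, rfl⟩ := Ideal.Quotient.mk_surjective y
      rw [← map_pow, Ideal.Quotient.eq_zero_iff_mem] at hn
      rw [Ideal.Quotient.eq_zero_iff_mem]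
      exact hrad x n hn
    rintro ⟨x, hxO, N, hxN⟩
    obtain ⟨m, hm1, hm⟩ := exists_pow_succ_eq_self (Ideal.Quotient.mk (conductorIdeal O) x)
    have hkey : (Ideal.Quotient.mk (conductorIdeal O)) (x ^ (N * m + 1))
        = Ideal.Quotient.mk (conductorIdeal O) x := by
      rw [map_pow]
      exact pow_eq_self_of_pow_succ hm N
    have hmem : x - x ^ (N * m + 1) ∈ conductorIdeal O := by
      rw [← Ideal.Quotient.eq_zero_iff_mem, map_sub, hkey, sub_self]
    have hxpow : x ^ (N * m + 1) ∈ O := hxN _ (by nlinarith)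
    have : x ∈ O := by
      have := O.add_mem (hfO _ hmem) hxpow
      simpa using this
    exact hxO this
end
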